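/- arXiv:math/0503169 — 4 statements merged into one kernel-verified Lean document; each statement's English description precedes it below -/
import Mathlib

section
/- Fix a real number c > 0. For every n ≥ 2, ∫_ℝ Γ̃_n(x) dμ_c(x) = (−1)^n·(1 − c); moreover, with d_0 = −1, d_1 = 1 and d_n = (−1)^n·(c − 1) for n ≥ 2, the polynomials Γ_n(x) = Γ̃_n(x) + d_n satisfy ∫_ℝ Γ_n(x) dμ_c(x) = 0 for every n ≥ 0. -/
open Polynomial MeasureTheory

/-- The argument substitution `u = (x - (1+c)) / (2√c)` as a real polynomial. -/
noncomputable def shiftArg (c : ℝ) : Polynomial ℝ :=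
  C (1 / (2 * Real.sqrt c)) * (X - C (1 + c))

/-- The shifted Chebyshev polynomials of the first kind:
`Γ̃_0 = 1`, `Γ̃_n(x) = 2 c^{n/2} T_n((x-(1+c))/(2√c))` for `n ≥ 1`. -/
noncomputable def Gammat (c : ℝ) : ℕ → Polynomial ℝ
  | 0 => 1
  | n + 1 =>
      C (2 * Real.sqrt c ^ (n + 1)) *
        (Polynomial.Chebyshev.T ℝ ((n : ℤ) + 1)).comp (shiftArg c)

/-- The Marchenko–Pastur distribution of parameter `c`:
`μ_c = max(1-c,0) δ_0 + (√((b-x)(x-a))/(2πx)) 1_{[a,b]}(x) dx`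
where `a = (√c-1)²`, `b = (√c+1)²`. -/
noncomputable def MarchenkoPastur (c : ℝ) : Measure ℝ :=
  ENNReal.ofReal (max (1 - c) 0) • Measure.dirac 0 +
    volume.withDensity fun x =>
      ENNReal.ofReal
        (Set.indicator (Set.Icc ((Real.sqrt c - 1) ^ 2) ((Real.sqrt c + 1) ^ 2))
          (fun x => Real.sqrt (((Real.sqrt c + 1) ^ 2 - x) * (x - (Real.sqrt c - 1) ^ 2)) /
            (2 * Real.pi * x)) x)

/-- The constants `d_0 = -1`, `d_1 = 1`, `d_n = (-1)^n (c-1)` for `n ≥ 2`. -/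
noncomputable def dcoef (c : ℝ) : ℕ → ℝ
  | 0 => -1
  | 1 => 1
  | n + 2 => (-1 : ℝ) ^ (n + 2) * (c - 1)


open Real Set
open scoped ENNReal NNReal

namespace MPaux

noncomputable def phi (c θ : ℝ) : ℝ := 1 + c + 2 * Real.sqrt c * Real.cos θ
noncomputable def aa (c : ℝ) : ℝ := (Real.sqrt c - 1) ^ 2
noncomputable def bb (c : ℝ) : ℝ := (Real.sqrt c + 1) ^ 2
noncomputable def rho (c x : ℝ) : ℝ :=
  Real.sqrt ((bb c - x) * (x - aa c)) / (2 * Real.pi * x)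

variable {c : ℝ}

lemma ht (hc : 0 < c) : 0 < Real.sqrt c := Real.sqrt_pos.2 hc
lemma htsq (hc : 0 < c) : Real.sqrt c ^ 2 = c := Real.sq_sqrt hc.le

lemma cos_mem {θ : ℝ} (hθ : θ ∈ Ioo 0 Real.pi) : Real.cos θ ∈ Ioo (-1 : ℝ) 1 := by
  constructor
  · have := Real.strictAntiOn_cos ⟨hθ.1.le, hθ.2.le⟩ (Set.right_mem_Icc.2 Real.pi_pos.le) hθ.2
    simpa [Real.cos_pi] using this
  · have := Real.strictAntiOn_cos (Set.left_mem_Icc.2 Real.pi_pos.le) ⟨hθ.1.le, hθ.2.le⟩ hθ.1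
    simpa using this

lemma phi_mem (hc : 0 < c) {θ : ℝ} (hθ : θ ∈ Ioo 0 Real.pi) : phi c θ ∈ Ioo (aa c) (bb c) := by
  have h1 := cos_mem hθ
  have h2 := ht hc
  have h3 := htsq hc
  constructor
  · simp only [phi, aa]; nlinarith [h1.1]
  · simp only [phi, bb]; nlinarith [h1.2]

lemma phi_pos (hc : 0 < c) {θ : ℝ} (hθ : θ ∈ Ioo 0 Real.pi) : 0 < phi c θ := by
  have h1 := cos_mem hθ
  have h2 := ht hc
  have h3 := htsq hc
  simp only [phi]; nlinarith [h1.1, sq_nonneg (Real.sqrt c - 1)]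

lemma phi_injOn (hc : 0 < c) : Set.InjOn (phi c) (Ioo 0 Real.pi) := by
  intro x hx y hy h
  have h2 := ht hc
  have : Real.cos x = Real.cos y := by
    simp only [phi] at h; nlinarith
  exact Real.injOn_cos ⟨hx.1.le, hx.2.le⟩ ⟨hy.1.le, hy.2.le⟩ this

lemma phi_image (hc : 0 < c) : phi c '' Ioo 0 Real.pi = Ioo (aa c) (bb c) := by
  apply Set.Subset.antisymm
  · rintro x ⟨θ, hθ, rfl⟩; exact phi_mem hc hθ
  · intro x hx
    have h2 := ht hc
    have h3 := htsq hc
    set u : ℝ := (x - (1 + c)) / (2 * Real.sqrt c) with hu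
    have hu1 : -1 < u := by
      rw [hu, lt_div_iff₀ (by positivity)]
      simp only [aa] at hx; nlinarith [hx.1]
    have hu2 : u < 1 := by
      rw [hu, div_lt_iff₀ (by positivity)]
      simp only [bb] at hx; nlinarith [hx.2]
    have hlt : Real.arccos u < Real.pi := by
      rw [Real.arccos, sub_lt_iff_lt_add]
      have := Real.neg_pi_div_two_lt_arcsin.2 hu1
      linarith [Real.pi_pos]
    refine ⟨Real.arccos u, ⟨Real.arccos_pos.2 hu2, hlt⟩, ?_⟩
    simp only [phi]
    rw [Real.cos_arccos hu1.le hu2.le, hu]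
    field_simp
    ring

lemma phi_deriv {θ : ℝ} (hθ : θ ∈ Ioo 0 Real.pi) :
    HasDerivWithinAt (phi c) (-(2 * Real.sqrt c * Real.sin θ)) (Ioo 0 Real.pi) θ := by
  have : HasDerivAt (phi c) (2 * Real.sqrt c * -Real.sin θ) θ := by
    rw [show phi c = fun θ => 1 + c + 2 * Real.sqrt c * Real.cos θ from rfl]
    simpa using ((Real.hasDerivAt_cos θ).const_mul (2 * Real.sqrt c)).const_add (1 + c)
  simpa [mul_comm, mul_neg] using this.hasDerivWithinAt

lemma cov (hc : 0 < c) (g : ℝ → ℝ) :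
    ∫ x in Ioo (aa c) (bb c), g x =
      ∫ θ in Ioo 0 Real.pi, (2 * Real.sqrt c * Real.sin θ) * g (phi c θ) := by
  rw [← phi_image hc,
    integral_image_eq_integral_abs_deriv_smul measurableSet_Ioo
      (fun θ hθ => phi_deriv hθ) (phi_injOn hc) g]
  refine setIntegral_congr_fun measurableSet_Ioo fun θ hθ => ?_
  have hs : 0 ≤ Real.sin θ := Real.sin_nonneg_of_nonneg_of_le_pi hθ.1.le hθ.2.le
  have h2 := (ht hc).le
  rw [abs_neg, abs_of_nonneg (by positivity), smul_eq_mul]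

lemma cov_int (hc : 0 < c) (g : ℝ → ℝ) :
    IntegrableOn g (Ioo (aa c) (bb c)) ↔
      IntegrableOn (fun θ => (2 * Real.sqrt c * Real.sin θ) * g (phi c θ)) (Ioo 0 Real.pi) := by
  rw [← phi_image hc,
    integrableOn_image_iff_integrableOn_abs_deriv_smul measurableSet_Ioo
      (fun θ hθ => phi_deriv hθ) (phi_injOn hc) g]
  apply integrableOn_congr_fun _ measurableSet_Ioo
  intro θ hθ
  have hs : 0 ≤ Real.sin θ := Real.sin_nonneg_of_nonneg_of_le_pi hθ.1.le hθ.2.le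
  have h2 := (ht hc).le
  simp only [abs_neg, abs_of_nonneg (show (0:ℝ) ≤ 2 * Real.sqrt c * Real.sin θ by positivity),
    smul_eq_mul]

lemma ioo_int (f : ℝ → ℝ) :
    ∫ θ in Ioo 0 Real.pi, f θ = ∫ θ in (0:ℝ)..Real.pi, f θ := by
  rw [_root_.intervalIntegral.integral_of_le Real.pi_pos.le, integral_Ioc_eq_integral_Ioo]

lemma rho_phi (hc : 0 < c) {θ : ℝ} (hθ : θ ∈ Ioo 0 Real.pi) :
    2 * Real.sqrt c * Real.sin θ * rho c (phi c θ) =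
      (2 * c / Real.pi) * (Real.sin θ ^ 2 / phi c θ) := by
  have h2 := ht hc
  have h3 := htsq hc
  have hs : 0 ≤ Real.sin θ := Real.sin_nonneg_of_nonneg_of_le_pi hθ.1.le hθ.2.le
  have hsq : (bb c - phi c θ) * (phi c θ - aa c) = (2 * Real.sqrt c * Real.sin θ) ^ 2 := by
    simp only [bb, aa, phi]
    linear_combination (c + 4 * Real.sqrt c * Real.cos θ - Real.sqrt c ^ 2) * h3
      - 4 * Real.sqrt c ^ 2 * Real.sin_sq_add_cos_sq θ
  have hφ := phi_pos hc hθ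
  simp only [rho, hsq, Real.sqrt_sq (by positivity : 0 ≤ 2 * Real.sqrt c * Real.sin θ)]
  have hπ := Real.pi_pos
  field_simp
  linear_combination (Real.sin θ ^ 2) * h3

lemma int_cos_nat (n : ℕ) (hn : n ≠ 0) :
    ∫ θ in (0:ℝ)..Real.pi, Real.cos (n * θ) = 0 := by
  have hn' : (n : ℝ) ≠ 0 := Nat.cast_ne_zero.2 hn
  rw [_root_.intervalIntegral.integral_comp_mul_left Real.cos hn']
  simp [Real.sin_nat_mul_pi, integral_cos]

lemma int_sinsq : ∫ θ in (0:ℝ)..Real.pi, Real.sin θ ^ 2 = Real.pi / 2 := by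
  rw [integral_sin_sq]
  simp [Real.sin_pi]

lemma int_cos_sinsq : ∫ θ in (0:ℝ)..Real.pi, Real.cos θ * Real.sin θ ^ 2 = 0 := by
  have := integral_sin_sq_mul_cos (a := 0) (b := Real.pi)
  simp only [Real.sin_pi, Real.sin_zero] at this
  have heq : (∫ θ in (0:ℝ)..Real.pi, Real.cos θ * Real.sin θ ^ 2)
      = ∫ x in (0:ℝ)..Real.pi, Real.sin x ^ 2 * Real.cos x :=
    _root_.intervalIntegral.integral_congr fun x _ => by ring
  rw [heq, this]
  ring

lemma int_cosn_sinsq (n : ℕ) (hn : 2 ≤ n) :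
    ∫ θ in (0:ℝ)..Real.pi, Real.cos (n * θ) * Real.sin θ ^ 2 =
      if n = 2 then -(Real.pi / 4) else 0 := by
  have key : ∀ θ : ℝ, Real.cos (n * θ) * Real.sin θ ^ 2 =
      (1/2) * Real.cos (n * θ) - (1/4) * Real.cos ((n + 2 : ℕ) * θ)
        - (1/4) * Real.cos ((n - 2 : ℕ) * θ) := by
    intro θ
    have e1 : ((n + 2 : ℕ) : ℝ) * θ = n * θ + 2 * θ := by push_cast; ring
    have e2 : ((n - 2 : ℕ) : ℝ) * θ = n * θ - 2 * θ := by
      rw [Nat.cast_sub hn]; ring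
    rw [e1, e2, Real.cos_add, Real.cos_sub, Real.cos_two_mul, Real.sin_sq θ]
    ring
  rw [_root_.intervalIntegral.integral_congr (fun θ _ => key θ)]
  have i1 : IntervalIntegrable (fun θ => (1/2) * Real.cos (n * θ)) volume 0 Real.pi :=
    (by continuity : Continuous fun θ : ℝ => (1/2) * Real.cos (n * θ)).intervalIntegrable _ _
  have i2 : IntervalIntegrable (fun θ => (1/4) * Real.cos ((n + 2 : ℕ) * θ)) volume 0 Real.pi :=
    (by continuity : Continuous fun θ : ℝ => (1/4) * Real.cos ((n + 2 : ℕ) * θ)).intervalIntegrable _ _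
  have i3 : IntervalIntegrable (fun θ => (1/4) * Real.cos ((n - 2 : ℕ) * θ)) volume 0 Real.pi :=
    (by continuity : Continuous fun θ : ℝ => (1/4) * Real.cos ((n - 2 : ℕ) * θ)).intervalIntegrable _ _
  rw [_root_.intervalIntegral.integral_sub (i1.sub i2) i3, _root_.intervalIntegral.integral_sub i1 i2,
    _root_.intervalIntegral.integral_const_mul, _root_.intervalIntegral.integral_const_mul,
    _root_.intervalIntegral.integral_const_mul, int_cos_nat n (by omega), int_cos_nat (n+2) (by omega)]
  by_cases h2 : n = 2
  · subst h2
    norm_num [_root_.intervalIntegral.integral_const]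
    ring
  · rw [int_cos_nat (n-2) (by omega)]
    simp [h2]

lemma arctan_image : (fun u : ℝ => 2 * Real.arctan u) '' Ioi 0 = Ioo 0 Real.pi := by
  ext θ
  constructor
  · rintro ⟨u, hu, rfl⟩
    have h1 : 0 < Real.arctan u := by
      have := Real.arctan_strictMono hu
      simpa [Real.arctan_zero] using this
    have h2 := Real.arctan_lt_pi_div_two u
    constructor
    · show (0:ℝ) < 2 * Real.arctan u
      linarith
    · show 2 * Real.arctan u < Real.pi
      linarith
  · intro hθ
    obtain ⟨hθ1, hθ2⟩ := hθ
    refine ⟨Real.tan (θ / 2), ?_, ?_⟩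
    · exact Real.tan_pos_of_pos_of_lt_pi_div_two (by linarith) (by linarith)
    · have harc : Real.arctan (Real.tan (θ / 2)) = θ / 2 :=
        Real.arctan_tan (by linarith [Real.pi_pos]) (by linarith)
      simp only [harc]
      ring

lemma Jint (hc : 0 < c) (hne : c ≠ 1) :
    ∫ θ in Ioo 0 Real.pi, 1 / phi c θ = Real.pi / |1 - c| := by
  have h2 := ht hc
  have h3 := htsq hc
  set t := Real.sqrt c with htdef
  have htne : t ≠ 1 := fun h => hne (by rw [← h3, h]; norm_num)
  set A : ℝ := (1 + t) ^ 2 with hAdef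
  set B : ℝ := (1 - t) ^ 2 with hBdef
  have hA : 0 < A := by positivity
  have hB : 0 < B := by
    have : 1 - t ≠ 0 := sub_ne_zero.2 (Ne.symm htne)
    positivity
  -- step 1 : change of variables θ = 2 arctan u
  have step1 : ∫ θ in Ioo 0 Real.pi, 1 / phi c θ
      = ∫ u in Ioi (0:ℝ), 2 / (A + B * u ^ 2) := by
    rw [← arctan_image, integral_image_eq_integral_abs_deriv_smul
      (f' := fun u => 2 * (1 / (1 + u ^ 2))) measurableSet_Ioi
      (fun u _ => ((Real.hasDerivAt_arctan u).const_mul 2).hasDerivWithinAt)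
      (fun x _ y _ h => Real.arctan_injective (by linarith [h] : Real.arctan x = Real.arctan y))
      (fun x => 1 / phi c x)]
    refine setIntegral_congr_fun measurableSet_Ioi fun u _ => ?_
    have hu2 : (0:ℝ) < 1 + u ^ 2 := by positivity
    have hcos : Real.cos (2 * Real.arctan u) = 2 * (1 / (1 + u ^ 2)) - 1 := by
      rw [Real.cos_two_mul, Real.cos_sq_arctan]
    have hφ : phi c (2 * Real.arctan u) * (1 + u ^ 2) = A + B * u ^ 2 := by
      simp only [phi, hcos, hAdef, hBdef]
      field_simp
      linear_combination (-1 - u ^ 2) * h3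
    have hφpos : 0 < phi c (2 * Real.arctan u) := by
      have h4 : 0 < A + B * u ^ 2 := by positivity
      nlinarith
    rw [smul_eq_mul, abs_of_nonneg (by positivity : (0:ℝ) ≤ 2 * (1 / (1 + u ^ 2)))]
    have h4 : (0:ℝ) < A + B * u ^ 2 := by positivity
    field_simp
    linear_combination (-1 : ℝ) * hφ
  rw [step1]
  -- step 2 : explicit antiderivative
  set k : ℝ := |1 - t| / (1 + t) with hkdef
  set K : ℝ := (1 + t) * |1 - t| with hKdef
  have habs : |1 - t| ≠ 0 := abs_ne_zero.2 (sub_ne_zero.2 (Ne.symm htne))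
  have habs' : 0 < |1 - t| := abs_pos.2 (sub_ne_zero.2 (Ne.symm htne))
  have hk : 0 < k := by positivity
  have hK : 0 < K := by positivity
  have hkA : k * A = K := by
    rw [hkdef, hKdef, hAdef]
    field_simp
  have hkK : k * K = B := by
    rw [hkdef, hKdef, hBdef]
    field_simp
    rw [← sq_abs (1 - t)]
  have hderiv : ∀ u ∈ Ici (0:ℝ), HasDerivAt (fun u => (2 / K) * Real.arctan (k * u))
      (2 / (A + B * u ^ 2)) u := by
    intro u _
    have h0 : HasDerivAt (fun u : ℝ => k * u) k u := by
      simpa using (hasDerivAt_id u).const_mul k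
    have h1 := (Real.hasDerivAt_arctan (k * u)).comp u h0
    have h4 : (0:ℝ) < A + B * u ^ 2 := by positivity
    have expand : K * (1 + (k * u) ^ 2) = k * (A + B * u ^ 2) := by
      linear_combination (-1 : ℝ) * hkA + (u ^ 2 * k) * hkK
    have heq : (2 / K) * (1 / (1 + (k * u) ^ 2) * k) = 2 / (A + B * u ^ 2) := by
      have e1 : (2 / K) * (1 / (1 + (k * u) ^ 2) * k) = (k * 2) / (K * (1 + (k * u) ^ 2)) := by
        field_simp
      rw [e1, expand, mul_div_mul_left _ _ hk.ne']
    have := (h1.const_mul (2 / K))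
    rw [heq] at this
    exact this
  have hlim : Filter.Tendsto (fun u => (2 / K) * Real.arctan (k * u)) Filter.atTop
      (nhds ((2 / K) * (Real.pi / 2))) := by
    apply Filter.Tendsto.const_mul
    have h5 : Filter.Tendsto (fun u : ℝ => k * u) Filter.atTop Filter.atTop :=
      Filter.tendsto_id.const_mul_atTop hk
    exact (Real.tendsto_arctan_atTop.mono_right nhdsWithin_le_nhds).comp h5
  have := integral_Ioi_of_hasDerivAt_of_nonneg' hderiv
    (fun u _ => by positivity) hlim
  rw [this]
  have hmul : (1 + t) * (1 - t) = 1 - c := by linear_combination (-1 : ℝ) * h3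
  have hKc : K = |1 - c| := by
    rw [hKdef, ← abs_of_pos (show (0:ℝ) < 1 + t by positivity), ← abs_mul, hmul]
  rw [hKc]
  simp [Real.arctan_zero]

lemma pole (hc : 0 < c) :
    ∫ θ in Ioo 0 Real.pi, Real.sin θ ^ 2 / phi c θ = Real.pi / (2 * c) * min 1 c := by
  have h2 := ht hc
  have h3 := htsq hc
  by_cases h1 : c = 1
  · subst h1
    have hs : Real.sqrt 1 = 1 := Real.sqrt_one
    have congr1 : ∫ θ in Ioo 0 Real.pi, Real.sin θ ^ 2 / phi 1 θ
        = ∫ θ in Ioo 0 Real.pi, (1 - Real.cos θ) / 2 := by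
      refine setIntegral_congr_fun measurableSet_Ioo fun θ hθ => ?_
      have hcos := cos_mem hθ
      have hpos : 0 < 2 + 2 * Real.cos θ := by linarith [hcos.1]
      have hφ : phi 1 θ = 2 + 2 * Real.cos θ := by simp [phi, hs]; ring
      rw [hφ]
      rw [div_eq_div_iff (by positivity) (by norm_num)]
      nlinarith [Real.sin_sq_add_cos_sq θ]
    rw [congr1, ioo_int]
    have : ∫ θ in (0:ℝ)..Real.pi, (1 - Real.cos θ) / 2
        = ∫ θ in (0:ℝ)..Real.pi, (1/2 : ℝ) - (fun θ => Real.cos θ / 2) θ :=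
      _root_.intervalIntegral.integral_congr fun θ _ => by ring
    rw [this, _root_.intervalIntegral.integral_sub (by simp) ((Real.continuous_cos.div_const 2).intervalIntegrable _ _)]
    simp [integral_cos]
    ring
  · -- c ≠ 1
    have htne : Real.sqrt c ≠ 1 := fun h => h1 (by rw [← h3, h]; norm_num)
    have hb0 : 1 - Real.sqrt c ≠ 0 := sub_ne_zero.2 (Ne.symm htne)
    have hφlb : ∀ θ : ℝ, 0 < phi c θ := by
      intro θ
      have hcos := Real.neg_one_le_cos θ
      simp only [phi]
      nlinarith [sq_pos_of_ne_zero hb0]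
    have hφcont : Continuous (phi c) := by
      have : phi c = fun θ => 1 + c + 2 * Real.sqrt c * Real.cos θ := rfl
      rw [this]; continuity
    have hinvcont : Continuous fun θ => 1 / phi c θ :=
      continuous_const.div hφcont fun θ => (hφlb θ).ne'
    have decomp : ∀ θ : ℝ, Real.sin θ ^ 2 / phi c θ
        = -Real.cos θ / (2 * Real.sqrt c) + (1 + c) / (4 * c)
          - (1 - c) ^ 2 / (4 * c) * (1 / phi c θ) := by
      intro θ
      have hφ := hφlb θ
      have hsc := Real.sin_sq_add_cos_sq θ
      simp only [phi] at *
      field_simp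
      obtain ⟨r, hr⟩ : ∃ r, r = Real.sqrt c := ⟨_, rfl⟩
      rw [← hr] at h3 ⊢
      rw [← h3, Real.sin_sq]
      ring
    rw [MeasureTheory.integral_congr_ae (Filter.Eventually.of_forall fun θ => decomp θ), ioo_int]
    have icos : IntervalIntegrable (fun θ : ℝ => -Real.cos θ / (2 * Real.sqrt c)) volume 0 Real.pi :=
      ((Real.continuous_cos.neg).div_const _).intervalIntegrable _ _
    have iconst : IntervalIntegrable (fun _ : ℝ => (1 + c) / (4 * c)) volume 0 Real.pi :=
      intervalIntegrable_const
    have iJ : IntervalIntegrable (fun θ => (1 - c) ^ 2 / (4 * c) * (1 / phi c θ)) volume 0 Real.pi :=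
      (continuous_const.mul hinvcont).intervalIntegrable _ _
    rw [_root_.intervalIntegral.integral_sub (icos.add iconst) iJ,
      _root_.intervalIntegral.integral_add icos iconst]
    have I1 : ∫ θ in (0:ℝ)..Real.pi, -Real.cos θ / (2 * Real.sqrt c) = 0 := by
      rw [_root_.intervalIntegral.integral_div]
      simp [_root_.intervalIntegral.integral_neg, integral_cos]
    have I3 : ∫ θ in (0:ℝ)..Real.pi, (1 - c) ^ 2 / (4 * c) * (1 / phi c θ)
        = (1 - c) ^ 2 / (4 * c) * (Real.pi / |1 - c|) := by
      rw [_root_.intervalIntegral.integral_const_mul, ← ioo_int, Jint hc h1]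
    have habs : |1 - c| ≠ 0 := abs_ne_zero.2 (sub_ne_zero.2 (Ne.symm h1))
    have I3' : (1 - c) ^ 2 / (4 * c) * (Real.pi / |1 - c|) = |1 - c| * Real.pi / (4 * c) := by
      rw [← sq_abs (1 - c)]
      field_simp
    rw [I1, I3, I3']
    simp only [_root_.intervalIntegral.integral_const, smul_eq_mul, sub_zero, zero_add]
    rcases le_or_gt c 1 with hcle | hclt
    · rw [abs_of_nonneg (by linarith), min_eq_right hcle]
      field_simp
      ring
    · rw [abs_of_neg (by linarith), min_eq_left hclt.le]
      field_simp
      ring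

lemma rho_meas : Measurable (rho c) := by
  have h1 : Continuous fun x => Real.sqrt ((bb c - x) * (x - aa c)) :=
    ((continuous_const.sub continuous_id).mul (continuous_id.sub continuous_const)).sqrt
  exact h1.measurable.div ((continuous_const.mul continuous_id).measurable)

lemma rho_nonneg (hc : 0 < c) {x : ℝ} (hx : x ∈ Icc (aa c) (bb c)) : 0 ≤ rho c x := by
  rcases eq_or_lt_of_le hx.1 with h | h
  · rcases eq_or_ne x 0 with rfl | hx0
    · simp [rho]
    · have hxa : 0 ≤ aa c := sq_nonneg _
      have hxpos : 0 < x := lt_of_le_of_ne (le_trans hxa hx.1) (Ne.symm hx0)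
      exact div_nonneg (Real.sqrt_nonneg _) (by positivity)
  · have hxa : 0 ≤ aa c := sq_nonneg _
    have hxpos : 0 < x := lt_of_le_of_lt hxa h
    exact div_nonneg (Real.sqrt_nonneg _) (by positivity)

lemma ratio_bound (hc : 0 < c) {θ : ℝ} (hθ : θ ∈ Ioo 0 Real.pi) :
    Real.sin θ ^ 2 / phi c θ ∈ Icc (0:ℝ) (1 / Real.sqrt c) := by
  have h2 := ht hc
  have h3 := htsq hc
  have hφ := phi_pos hc hθ
  constructor
  · positivity
  · rw [div_le_div_iff₀ hφ h2]
    simp only [phi]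
    nlinarith [sq_nonneg (1 + Real.cos θ), sq_nonneg (1 - Real.sqrt c),
      Real.sin_sq_add_cos_sq θ]

/-- The Marchenko–Pastur measure, rewritten with our abbreviations. -/
lemma MP_eq : MarchenkoPastur c
    = ENNReal.ofReal (max (1 - c) 0) • Measure.dirac 0 +
      volume.withDensity fun x =>
        ((Real.toNNReal (Set.indicator (Icc (aa c) (bb c)) (rho c) x) : ℝ≥0) : ℝ≥0∞) := rfl

lemma MPint (hc : 0 < c) (p : Polynomial ℝ) :
    Integrable (fun x => p.eval x) (MarchenkoPastur c) ∧
    ∫ x, p.eval x ∂(MarchenkoPastur c)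
      = max (1 - c) 0 * p.eval 0
        + (2 * c / Real.pi) *
            ∫ θ in Ioo 0 Real.pi, (Real.sin θ ^ 2 / phi c θ) * p.eval (phi c θ) := by
  have h2 := ht hc
  have hfc : Continuous fun x => p.eval x := p.continuous
  -- integrability with respect to the atomic part
  have h_dirac : Integrable (fun x => p.eval x)
      (ENNReal.ofReal (max (1 - c) 0) • Measure.dirac 0) := by
    refine Integrable.smul_measure ?_ ENNReal.ofReal_ne_top
    refine ⟨hfc.aestronglyMeasurable, ?_⟩
    have hm : Measurable fun x : ℝ => ‖p.eval x‖ₑ :=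
      hfc.measurable.enorm
    simp only [HasFiniteIntegral]
    rw [lintegral_dirac' _ hm]
    exact ENNReal.coe_lt_top
  -- measurability of the density
  have hdens_meas : Measurable fun x =>
      Real.toNNReal (Set.indicator (Icc (aa c) (bb c)) (rho c) x) :=
    (rho_meas.indicator measurableSet_Icc).real_toNNReal
  -- the θ-side integrand is integrable
  obtain ⟨M, hM⟩ : ∃ M, ∀ x ∈ Icc (aa c) (bb c), ‖p.eval x‖ ≤ M :=
    (isCompact_Icc).exists_bound_of_continuousOn hfc.continuousOn
  have h_theta_int : IntegrableOn
      (fun θ => (2 * Real.sqrt c * Real.sin θ) * (rho c (phi c θ) * p.eval (phi c θ)))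
      (Ioo 0 Real.pi) := by
    apply Measure.integrableOn_of_bounded (M := (2 * c / Real.pi) * (1 / Real.sqrt c) * M)
      (measure_Ioo_lt_top.ne)
    · apply Measurable.aestronglyMeasurable
      have hφm : Measurable (phi c) := by
        have : phi c = fun θ => 1 + c + 2 * Real.sqrt c * Real.cos θ := rfl
        rw [this]; measurability
      exact ((measurable_const.mul Real.measurable_sin).mul
        ((rho_meas.comp hφm).mul (hfc.measurable.comp hφm)))
    · rw [ae_restrict_iff' measurableSet_Ioo]
      filter_upwards with θ hθ
      have hb := ratio_bound hc hθ
      have hmem := phi_mem hc hθ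
      have hMφ : ‖p.eval (phi c θ)‖ ≤ M := hM _ ⟨hmem.1.le, hmem.2.le⟩
      have hM0 : 0 ≤ M := le_trans (norm_nonneg _) hMφ
      have key : 2 * Real.sqrt c * Real.sin θ * (rho c (phi c θ) * p.eval (phi c θ))
          = ((2 * c / Real.pi) * (Real.sin θ ^ 2 / phi c θ)) * p.eval (phi c θ) := by
        rw [← mul_assoc, rho_phi hc hθ]
      rw [key]
      have hπ := Real.pi_pos
      rw [norm_mul]
      calc ‖(2 * c / Real.pi) * (Real.sin θ ^ 2 / phi c θ)‖ * ‖p.eval (phi c θ)‖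
          ≤ ((2 * c / Real.pi) * (1 / Real.sqrt c)) * M := by
            apply mul_le_mul _ hMφ (norm_nonneg _) (by positivity)
            rw [norm_mul, norm_of_nonneg (by positivity : (0:ℝ) ≤ 2 * c / Real.pi),
              norm_of_nonneg hb.1]
            exact mul_le_mul_of_nonneg_left hb.2 (by positivity)
        _ = (2 * c / Real.pi) * (1 / Real.sqrt c) * M := by ring
  -- integrability on the interval, x side
  have h_Ioo_int : IntegrableOn (fun x => rho c x * p.eval x) (Ioo (aa c) (bb c)) :=
    (cov_int hc _).2 (by
      apply h_theta_int.congr_fun _ measurableSet_Ioo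
      intro θ hθ
      ring)
  have h_Icc_int : IntegrableOn (fun x => rho c x * p.eval x) (Icc (aa c) (bb c)) := by
    rwa [integrableOn_Icc_iff_integrableOn_Ioo]
  have h_ind_eq : (fun x => ((Real.toNNReal (Set.indicator (Icc (aa c) (bb c)) (rho c) x) : ℝ≥0) : ℝ)
        * p.eval x)
      = Set.indicator (Icc (aa c) (bb c)) (fun x => rho c x * p.eval x) := by
    funext x
    by_cases hx : x ∈ Icc (aa c) (bb c)
    · rw [Set.indicator_of_mem hx, Set.indicator_of_mem hx,
        Real.coe_toNNReal _ (rho_nonneg hc hx)]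
    · rw [Set.indicator_of_notMem hx, Set.indicator_of_notMem hx]
      simp
  have h_wd : Integrable (fun x => p.eval x)
      (volume.withDensity fun x =>
        ((Real.toNNReal (Set.indicator (Icc (aa c) (bb c)) (rho c) x) : ℝ≥0) : ℝ≥0∞)) := by
    rw [integrable_withDensity_iff_integrable_coe_smul₀ hdens_meas.aemeasurable]
    simp only [smul_eq_mul]
    rw [h_ind_eq, integrable_indicator_iff measurableSet_Icc]
    exact h_Icc_int
  constructor
  · rw [MP_eq]
    exact h_dirac.add_measure h_wd
  · rw [MP_eq, integral_add_measure h_dirac h_wd, integral_smul_measure,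
      integral_dirac, ENNReal.toReal_ofReal (le_max_right _ _),
      integral_withDensity_eq_integral_smul₀ hdens_meas.aemeasurable]
    simp only [NNReal.smul_def, smul_eq_mul]
    rw [h_ind_eq, integral_indicator measurableSet_Icc, integral_Icc_eq_integral_Ioo,
      cov hc (fun x => rho c x * p.eval x)]
    congr 1
    rw [← integral_const_mul]
    refine setIntegral_congr_fun measurableSet_Ioo fun θ hθ => ?_
    rw [← mul_assoc, ← mul_assoc, rho_phi hc hθ]

lemma shift_eval (hc : 0 < c) (x : ℝ) :
    (shiftArg c).eval x = (x - (1 + c)) / (2 * Real.sqrt c) := by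
  have h2 := (ht hc).ne'
  simp [shiftArg]
  ring

lemma Gammat_eval (hc : 0 < c) (m : ℕ) (x : ℝ) :
    (Gammat c (m + 1)).eval x
      = 2 * Real.sqrt c ^ (m + 1) *
          (Polynomial.Chebyshev.T ℝ ((m : ℤ) + 1)).eval ((x - (1 + c)) / (2 * Real.sqrt c)) := by
  simp [Gammat, Polynomial.eval_comp, shift_eval hc]

lemma Gammat_phi (hc : 0 < c) (m : ℕ) (θ : ℝ) :
    (Gammat c (m + 1)).eval (phi c θ)
      = 2 * Real.sqrt c ^ (m + 1) * Real.cos ((m + 1 : ℕ) * θ) := by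
  have h2 := (ht hc).ne'
  have harg : (phi c θ - (1 + c)) / (2 * Real.sqrt c) = Real.cos θ := by
    simp only [phi]
    field_simp
    ring
  rw [Gammat_eval hc, harg, Polynomial.Chebyshev.T_real_cos]
  norm_num

lemma G1 (hc : 0 < c) : Gammat c 1 = X - C (1 + c) := by
  apply Polynomial.funext
  intro x
  have h2 := (ht hc).ne'
  have := Gammat_eval hc 0 x
  norm_num at this
  rw [this]
  simp only [Polynomial.eval_sub, Polynomial.eval_X, Polynomial.eval_C]
  field_simp

lemma G2 (hc : 0 < c) :
    Gammat c 2 = X ^ 2 - C (2 * (1 + c)) * X + C ((1 + c) ^ 2 - 2 * c) := by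
  apply Polynomial.funext
  intro x
  have h2 := (ht hc).ne'
  have h3 := htsq hc
  have := Gammat_eval hc 1 x
  norm_num at this
  rw [Polynomial.Chebyshev.T_two] at this
  simp only [Polynomial.eval_sub, Polynomial.eval_mul, Polynomial.eval_pow,
    Polynomial.eval_ofNat, Polynomial.eval_X, Polynomial.eval_one] at this
  rw [this]
  simp only [Polynomial.eval_add, Polynomial.eval_sub, Polynomial.eval_mul,
    Polynomial.eval_pow, Polynomial.eval_X, Polynomial.eval_C]
  field_simp
  linear_combination (-2 : ℝ) * h3

lemma G3 (hc : 0 < c) (m : ℕ) :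
    Gammat c (m + 3) = (X - C (1 + c)) * Gammat c (m + 2) - C c * Gammat c (m + 1) := by
  apply Polynomial.funext
  intro x
  have h2 := ht hc
  have h3 := htsq hc
  have e1 := Gammat_eval hc (m + 2) x
  have e2 := Gammat_eval hc (m + 1) x
  have e3 := Gammat_eval hc m x
  have hidx : ((m + 2 : ℕ) : ℤ) + 1 = ((m : ℤ) + 1) + 2 := by push_cast; ring
  have hrec := Polynomial.Chebyshev.T_add_two ℝ ((m : ℤ) + 1)
  rw [hidx, hrec] at e1
  simp only [Polynomial.eval_sub, Polynomial.eval_mul, Polynomial.eval_ofNat,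
    Polynomial.eval_X] at e1
  have hidx2 : ((m + 1 : ℕ) : ℤ) + 1 = ((m : ℤ) + 1) + 1 := by push_cast; ring
  rw [hidx2] at e2
  simp only [Polynomial.eval_sub, Polynomial.eval_mul, Polynomial.eval_X, Polynomial.eval_C]
  rw [e1, e2, e3]
  set A := (Polynomial.Chebyshev.T ℝ ((m : ℤ) + 1 + 1)).eval ((x - (1 + c)) / (2 * Real.sqrt c))
  set B := (Polynomial.Chebyshev.T ℝ ((m : ℤ) + 1)).eval ((x - (1 + c)) / (2 * Real.sqrt c))
  have hp1 : Real.sqrt c ^ (m + 3) = Real.sqrt c ^ (m + 1) * Real.sqrt c ^ 2 := by ring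
  have hp2 : Real.sqrt c ^ (m + 2) = Real.sqrt c ^ (m + 1) * Real.sqrt c := by ring
  rw [hp1, hp2, h3]
  field_simp
  linear_combination (A * (1 + c - x)) * h3

lemma int_one (hc : 0 < c) : ∫ x, (1 : Polynomial ℝ).eval x ∂(MarchenkoPastur c) = 1 := by
  rw [(MPint hc 1).2]
  simp only [Polynomial.eval_one, mul_one]
  have hπ := Real.pi_pos
  rw [pole hc]
  have h1 : 2 * c / Real.pi * (Real.pi / (2 * c) * min 1 c) = min 1 c := by
    field_simp
  rw [h1]
  rcases le_total c 1 with h | h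
  · rw [max_eq_left (by linarith), min_eq_right h]; ring
  · rw [max_eq_right (by linarith), min_eq_left h]; ring

lemma int_X (hc : 0 < c) : ∫ x, (X : Polynomial ℝ).eval x ∂(MarchenkoPastur c) = c := by
  rw [(MPint hc X).2]
  simp only [Polynomial.eval_X, mul_zero, zero_add]
  have h0 : ∫ θ in Ioo 0 Real.pi, Real.sin θ ^ 2 / phi c θ * phi c θ
      = ∫ θ in (0:ℝ)..Real.pi, Real.sin θ ^ 2 := by
    rw [← ioo_int]
    refine setIntegral_congr_fun measurableSet_Ioo fun θ hθ => ?_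
    rw [div_mul_cancel₀ _ (phi_pos hc hθ).ne']
  rw [h0, int_sinsq]
  have hπ := Real.pi_pos
  field_simp

lemma int_X2 (hc : 0 < c) :
    ∫ x, (X ^ 2 : Polynomial ℝ).eval x ∂(MarchenkoPastur c) = c * (1 + c) := by
  rw [(MPint hc (X ^ 2)).2]
  simp only [Polynomial.eval_pow, Polynomial.eval_X]
  norm_num
  have h0 : ∫ θ in Ioo 0 Real.pi, Real.sin θ ^ 2 / phi c θ * phi c θ ^ 2
      = ∫ θ in (0:ℝ)..Real.pi,
          ((1 + c) * Real.sin θ ^ 2 + (2 * Real.sqrt c) * (Real.cos θ * Real.sin θ ^ 2)) := by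
    rw [← ioo_int]
    refine setIntegral_congr_fun measurableSet_Ioo fun θ hθ => ?_
    have hφ := (phi_pos hc hθ).ne'
    have : Real.sin θ ^ 2 / phi c θ * phi c θ ^ 2 = Real.sin θ ^ 2 * phi c θ := by
      field_simp
    rw [this]
    simp only [phi]
    ring
  rw [h0, _root_.intervalIntegral.integral_add
    (f := fun θ => (1 + c) * Real.sin θ ^ 2) (g := fun θ => 2 * Real.sqrt c * (Real.cos θ * Real.sin θ ^ 2))
    ((continuous_const.mul (Real.continuous_sin.pow 2)).intervalIntegrable _ _)
    ((continuous_const.mul (Real.continuous_cos.mul (Real.continuous_sin.pow 2))).intervalIntegrable _ _),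
    _root_.intervalIntegral.integral_const_mul, _root_.intervalIntegral.integral_const_mul,
    int_sinsq, int_cos_sinsq]
  have hπ := Real.pi_pos
  field_simp
  ring

lemma int_XG (hc : 0 < c) (m : ℕ) :
    ∫ x, (X * Gammat c (m + 1)).eval x ∂(MarchenkoPastur c)
      = if m + 1 = 2 then -c ^ 2 else 0 := by
  have h2 := ht hc
  have h3 := htsq hc
  have hπ := Real.pi_pos
  rw [(MPint hc _).2]
  simp only [Polynomial.eval_mul, Polynomial.eval_X, zero_mul, mul_zero, zero_add]
  have h0 : ∫ θ in Ioo 0 Real.pi,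
        Real.sin θ ^ 2 / phi c θ * (phi c θ * (Gammat c (m + 1)).eval (phi c θ))
      = ∫ θ in (0:ℝ)..Real.pi,
          (2 * Real.sqrt c ^ (m + 1)) * (Real.cos ((m + 1 : ℕ) * θ) * Real.sin θ ^ 2) := by
    rw [← ioo_int]
    refine setIntegral_congr_fun measurableSet_Ioo fun θ hθ => ?_
    have hφ := (phi_pos hc hθ).ne'
    rw [Gammat_phi hc]
    field_simp
  rw [h0, _root_.intervalIntegral.integral_const_mul]
  by_cases hm : m = 0
  · subst hm
    have h1 : ∀ θ : ℝ, Real.cos ((0 + 1 : ℕ) * θ) * Real.sin θ ^ 2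
        = Real.cos θ * Real.sin θ ^ 2 := by
      intro θ; norm_num
    simp only [h1]
    rw [int_cos_sinsq]
    norm_num
  · rw [int_cosn_sinsq (m + 1) (by omega)]
    by_cases h2' : m + 1 = 2
    · rw [if_pos h2', if_pos h2']
      have hm1 : m = 1 := by omega
      subst hm1
      have ht2 : Real.sqrt c ^ (1 + 1) = c := h3
      rw [ht2]
      field_simp
      ring
    · rw [if_neg h2', if_neg h2']
      simp

lemma II_add (hc : 0 < c) (p q : Polynomial ℝ) :
    ∫ x, (p + q).eval x ∂(MarchenkoPastur c)
      = (∫ x, p.eval x ∂(MarchenkoPastur c)) + ∫ x, q.eval x ∂(MarchenkoPastur c) := by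
  simp only [Polynomial.eval_add]
  exact integral_add (MPint hc p).1 (MPint hc q).1

lemma II_sub (hc : 0 < c) (p q : Polynomial ℝ) :
    ∫ x, (p - q).eval x ∂(MarchenkoPastur c)
      = (∫ x, p.eval x ∂(MarchenkoPastur c)) - ∫ x, q.eval x ∂(MarchenkoPastur c) := by
  simp only [Polynomial.eval_sub]
  exact integral_sub (MPint hc p).1 (MPint hc q).1

lemma II_Cmul (hc : 0 < c) (k : ℝ) (p : Polynomial ℝ) :
    ∫ x, (C k * p).eval x ∂(MarchenkoPastur c)
      = k * ∫ x, p.eval x ∂(MarchenkoPastur c) := by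
  simp only [Polynomial.eval_mul, Polynomial.eval_C]
  exact integral_const_mul k _

lemma int_C (hc : 0 < c) (k : ℝ) :
    ∫ x, (C k : Polynomial ℝ).eval x ∂(MarchenkoPastur c) = k := by
  have h := II_Cmul hc k 1
  rw [mul_one, int_one hc, mul_one] at h
  exact h

lemma S1 (hc : 0 < c) : ∫ x, (Gammat c 1).eval x ∂(MarchenkoPastur c) = -1 := by
  rw [G1 hc, II_sub hc, int_X hc, int_C hc]
  ring

lemma S2 (hc : 0 < c) : ∫ x, (Gammat c 2).eval x ∂(MarchenkoPastur c) = 1 - c := by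
  rw [G2 hc, II_add hc, II_sub hc, int_X2 hc, II_Cmul hc, int_X hc, int_C hc]
  ring

lemma Srec (hc : 0 < c) (m : ℕ) :
    ∫ x, (Gammat c (m + 3)).eval x ∂(MarchenkoPastur c)
      = (if m + 2 = 2 then -c ^ 2 else 0)
        - (1 + c) * (∫ x, (Gammat c (m + 2)).eval x ∂(MarchenkoPastur c))
        - c * ∫ x, (Gammat c (m + 1)).eval x ∂(MarchenkoPastur c) := by
  have hpoly : Gammat c (m + 3)
      = X * Gammat c (m + 2) - C (1 + c) * Gammat c (m + 2) - C c * Gammat c (m + 1) := by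
    rw [G3 hc m]; ring
  rw [hpoly, II_sub hc, II_sub hc, II_Cmul hc, II_Cmul hc]
  have := int_XG hc (m + 1)
  rw [show m + 1 + 1 = m + 2 from rfl] at this
  rw [this]

lemma Sval (hc : 0 < c) : ∀ n : ℕ,
    (∫ x, (Gammat c (n + 2)).eval x ∂(MarchenkoPastur c) = (-1 : ℝ) ^ n * (1 - c)) ∧
    (∫ x, (Gammat c (n + 3)).eval x ∂(MarchenkoPastur c) = (-1 : ℝ) ^ (n + 1) * (1 - c)) := by
  intro n
  induction n with
  | zero =>
    constructor
    · rw [S2 hc]; ring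
    · have := Srec hc 0
      rw [S2 hc, S1 hc] at this
      rw [this]
      norm_num
      ring
  | succ k ih =>
    refine ⟨by rw [ih.2], ?_⟩
    have := Srec hc (k + 1)
    rw [show k + 1 + 2 = k + 3 from rfl, show k + 1 + 1 = k + 2 from rfl, ih.1, ih.2] at this
    rw [show k + 1 + 3 = k + 4 from rfl] at this
    rw [show k + 1 + 3 = k + 4 from rfl, this, if_neg (by omega)]
    ring

end MPaux

theorem stmt2 (c : ℝ) (hc : 0 < c) :
    (∀ n : ℕ, 2 ≤ n →
      ∫ x, (Gammat c n).eval x ∂(MarchenkoPastur c) = (-1 : ℝ) ^ n * (1 - c)) ∧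
    (∀ n : ℕ,
      ∫ x, ((Gammat c n).eval x + dcoef c n) ∂(MarchenkoPastur c) = 0) := by
  constructor
  · intro n hn
    obtain ⟨m, rfl⟩ : ∃ m, n = m + 2 := ⟨n - 2, by omega⟩
    rw [(MPaux.Sval hc m).1]
    ring
  · intro n
    match n with
    | 0 =>
      have h : ∀ x : ℝ, (Gammat c 0).eval x + dcoef c 0 = 0 := by
        intro x; simp [Gammat, dcoef]
      simp only [h, integral_zero]
    | 1 =>
      have h : ∀ x : ℝ, (Gammat c 1).eval x + dcoef c 1
          = (Gammat c 1 + Polynomial.C (dcoef c 1)).eval x := by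
        intro x; simp
      simp only [h]
      rw [MPaux.II_add hc, MPaux.S1 hc, MPaux.int_C hc]
      simp [dcoef]
    | (m + 2) =>
      have h : ∀ x : ℝ, (Gammat c (m + 2)).eval x + dcoef c (m + 2)
          = (Gammat c (m + 2) + Polynomial.C (dcoef c (m + 2))).eval x := by
        intro x; simp
      simp only [h]
      rw [MPaux.II_add hc, (MPaux.Sval hc m).1, MPaux.int_C hc]
      simp only [dcoef]
      ring
end

section
/- Fix a real number c > 0. Let g_{n,k} (0 ≤ k ≤ n) be the unique real numbers with x^n = Σ_{k=0}^n g_{n,k}·Γ̃_k(x), extended by g_{n,k} = 0 for k > n, and let p_{n,0} be defined by x^n = Σ_{k=0}^n p_{n,k}·Π_k(x). Set G_k(z) = Σ_{n≥0} g_{n,k} z^n and P_0(z) = Σ_{n≥0} p_{n,0} z^n in ℝ[[z]]. Then for every n ≥ 0 one has the formal power series identity c^n·G_n(z) = (P_0(z) − 1)^n · G_0(z). -/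
open Polynomial

/-- The shifted Chebyshev polynomials of the second kind:
`Π_0 = 1`, `Π_n(x) = c^{n/2} U_n(u) + c^{(n-1)/2} U_{n-1}(u)` with
`u = (x-(1+c))/(2√c)`, for `n ≥ 1`. -/
noncomputable def PiP (c : ℝ) : ℕ → Polynomial ℝ
  | 0 => 1
  | n + 1 =>
      C (Real.sqrt c ^ (n + 1)) *
        (Polynomial.Chebyshev.U ℝ ((n : ℤ) + 1)).comp (shiftArg c) +
      C (Real.sqrt c ^ n) * (Polynomial.Chebyshev.U ℝ (n : ℤ)).comp (shiftArg c)

/-! ### Auxiliary basis `Vb` -/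

noncomputable def Vb (c : ℝ) : ℕ → Polynomial ℝ
  | 0 => 1
  | 1 => X - C (1 + c)
  | (k+2) => (X - C (1 + c)) * Vb c (k+1) - C c * Vb c k

lemma Vb_monic (c : ℝ) : ∀ k, (Vb c k).Monic ∧ (Vb c k).degree = k := by
  have base1 : (X - C (1+c) : ℝ[X]).Monic := monic_X_sub_C _
  intro k
  induction k using Nat.strong_induction_on with
  | _ k ih =>
    match k with
    | 0 => exact ⟨monic_one, degree_one⟩
    | 1 =>
      refine ⟨base1, ?_⟩
      show (X - C (1+c) : ℝ[X]).degree = ((1:ℕ) : WithBot ℕ)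
      exact_mod_cast degree_X_sub_C (1+c)
    | (k+2) =>
      obtain ⟨hm1, hd1⟩ := ih (k+1) (by omega)
      obtain ⟨hm0, hd0⟩ := ih k (by omega)
      have hmul : ((X - C (1+c)) * Vb c (k+1)).Monic := base1.mul hm1
      have hdmul : ((X - C (1+c)) * Vb c (k+1)).degree = ((k+2 : ℕ) : WithBot ℕ) := by
        rw [degree_mul, hd1, degree_X_sub_C]
        push_cast; ring
      have hlt : (- (C c * Vb c k)).degree < ((X - C (1+c)) * Vb c (k+1)).degree := by
        rw [degree_neg, hdmul]
        calc (C c * Vb c k).degree ≤ (0 : WithBot ℕ) + k :=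
              le_trans (degree_mul_le _ _) (add_le_add degree_C_le hd0.le)
          _ < ((k+2 : ℕ) : WithBot ℕ) := by
              rw [zero_add]; exact_mod_cast (by omega : k < k + 2)
      have e : Vb c (k+2) = (X - C (1+c)) * Vb c (k+1) + -(C c * Vb c k) := by
        show (X - C (1+c)) * Vb c (k+1) - C c * Vb c k = _; ring
      refine ⟨?_, ?_⟩
      · rw [e]; exact hmul.add_of_left hlt
      · rw [e, degree_add_eq_left_of_degree_lt hlt, hdmul]

lemma XsubC_eq {c : ℝ} (hc : 0 < c) :
    (X - C (1+c) : ℝ[X]) = 2 * C (Real.sqrt c) * shiftArg c := by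
  have h2 : (2 : ℝ[X]) = C 2 := by
    rw [eq_comm, ← map_ofNat (C : ℝ →+* ℝ[X]) 2]
  rw [shiftArg, ← mul_assoc, h2, ← C_mul, ← C_mul,
    show 2 * Real.sqrt c * (1 / (2 * Real.sqrt c)) = 1 by
      field_simp, C_1, one_mul]

lemma Vb_eq {c : ℝ} (hc : 0 < c) : ∀ k : ℕ, Vb c k =
    C (Real.sqrt c ^ k) * (Polynomial.Chebyshev.U ℝ (k : ℤ)).comp (shiftArg c) := by
  have hA := XsubC_eq hc
  have hc' : (C c : ℝ[X]) = C (Real.sqrt c) * C (Real.sqrt c) := by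
    rw [← C_mul, Real.mul_self_sqrt hc.le]
  intro k
  induction k using Nat.strong_induction_on with
  | _ k ih =>
    match k with
    | 0 => simp [Vb, Polynomial.Chebyshev.U_zero]
    | 1 =>
      show X - C (1+c) = _
      rw [show ((1:ℕ) : ℤ) = 1 by norm_num, Polynomial.Chebyshev.U_one]
      rw [mul_comp, X_comp, show ((2:ℝ[X])).comp (shiftArg c) = 2 by simp, hA, pow_one]
      ring
    | (k+2) =>
      have h1 := ih (k+1) (by omega)
      have h0 := ih k (by omega)
      show (X - C (1 + c)) * Vb c (k+1) - C c * Vb c k = _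
      rw [h1, h0, show (((k:ℕ)+2 : ℕ) : ℤ) = (k:ℤ)+2 by push_cast; ring,
        Polynomial.Chebyshev.U_add_two ℝ (k:ℤ),
        sub_comp, mul_comp, mul_comp, X_comp, show ((2:ℝ[X])).comp (shiftArg c) = 2 by simp,
        show (((k:ℕ)+1 : ℕ) : ℤ) = (k:ℤ)+1 by push_cast; ring,
        hA, hc']
      simp only [C_mul, pow_succ]
      ring

/-! ### Relations between the three families -/

lemma twoT {n : ℤ} : (2 : ℝ[X]) * Polynomial.Chebyshev.T ℝ n
    = Polynomial.Chebyshev.U ℝ n - Polynomial.Chebyshev.U ℝ (n-2) := by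
  have h1 := Polynomial.Chebyshev.T_eq_U_sub_X_mul_U ℝ n
  have h2 := Polynomial.Chebyshev.U_eq ℝ n
  linear_combination 2 * h1 + h2

lemma PiP_eq_Vb {c : ℝ} (hc : 0 < c) (k : ℕ) : PiP c (k+1) = Vb c (k+1) + Vb c k := by
  show C (Real.sqrt c ^ (k+1)) * _ + C (Real.sqrt c ^ k) * _ = _
  rw [Vb_eq hc (k+1), Vb_eq hc k]
  norm_cast

lemma PiP_zero (c : ℝ) : PiP c 0 = Vb c 0 := rfl
lemma Gammat_zero (c : ℝ) : Gammat c 0 = Vb c 0 := rfl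

lemma Gammat_one {c : ℝ} (hc : 0 < c) : Gammat c 1 = Vb c 1 := by
  show C (2 * Real.sqrt c ^ (0+1)) * _ = _
  rw [Vb_eq hc 1]
  rw [show (((0:ℕ):ℤ)+1) = 1 by norm_num, Polynomial.Chebyshev.T_one,
    show (((1:ℕ)):ℤ) = 1 by norm_num, Polynomial.Chebyshev.U_one, X_comp, mul_comp, X_comp,
    show ((2:ℝ[X])).comp (shiftArg c) = 2 by simp]
  rw [show (2 * Real.sqrt c ^ (0+1)) = 2 * Real.sqrt c by ring, C_mul,
    show (C (2:ℝ) : ℝ[X]) = 2 by rw [← map_ofNat (C : ℝ →+* ℝ[X]) 2]]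
  ring

lemma Gammat_eq_Vb {c : ℝ} (hc : 0 < c) (k : ℕ) :
    Gammat c (k+2) = Vb c (k+2) - C c * Vb c k := by
  show C (2 * Real.sqrt c ^ (k+1+1)) * _ = _
  rw [Vb_eq hc (k+2), Vb_eq hc k,
    show ((((k:ℕ)+1 : ℕ)):ℤ) + 1 = (k:ℤ)+1+1 by push_cast; ring,
    show (((k:ℕ)+2 : ℕ) : ℤ) = (k:ℤ)+1+1 by push_cast; ring]
  have hT := twoT (n := ((k:ℤ)+1)+1)
  rw [show (((k:ℤ)+1)+1) - 2 = (k:ℤ) by ring] at hT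
  have hT2 : 2 * (Polynomial.Chebyshev.T ℝ ((k:ℤ)+1+1)).comp (shiftArg c)
      = (Polynomial.Chebyshev.U ℝ ((k:ℤ)+1+1)).comp (shiftArg c)
        - (Polynomial.Chebyshev.U ℝ (k:ℤ)).comp (shiftArg c) := by
    rw [← sub_comp, ← hT, mul_comp, show ((2:ℝ[X])).comp (shiftArg c) = 2 by simp]
  have hcc : (C c : ℝ[X]) * C (Real.sqrt c ^ k) = C (Real.sqrt c ^ (k+2)) := by
    rw [← C_mul]
    congr 1
    rw [show Real.sqrt c ^ (k+2) = Real.sqrt c ^ 2 * Real.sqrt c ^ k by ring,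
      Real.sq_sqrt hc.le]
  have hC2 : (C (2 * Real.sqrt c ^ (k+1+1)) : ℝ[X]) = 2 * C (Real.sqrt c ^ (k+2)) := by
    rw [C_mul, show (C (2:ℝ) : ℝ[X]) = 2 by rw [← map_ofNat (C : ℝ →+* ℝ[X]) 2]]
  linear_combination C (Real.sqrt c ^ (k+2)) * hT2
    + (Polynomial.Chebyshev.U ℝ (k:ℤ)).comp (shiftArg c) * hcc
    + (Polynomial.Chebyshev.T ℝ ((k:ℤ)+1+1)).comp (shiftArg c) * hC2

/-! ### Multiplication by `X` -/

lemma X_mul_Vb0 (c : ℝ) : X * Vb c 0 = Vb c 1 + C (1+c) * Vb c 0 := by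
  show X * 1 = (X - C (1+c)) + C (1+c) * 1; ring

lemma X_mul_VbS (c : ℝ) (k : ℕ) :
    X * Vb c (k+1) = Vb c (k+2) + C (1+c) * Vb c (k+1) + C c * Vb c k := by
  show X * Vb c (k+1) = ((X - C (1 + c)) * Vb c (k+1) - C c * Vb c k) + _ + _; ring

/-- Recurrence coefficients for `x·Γ̃_k`. -/
noncomputable def rg (c : ℝ) (k : ℕ) : ℝ := if k = 0 then 0 else if k = 1 then 2*c else c
/-- Middle recurrence coefficients for `x·Π_k`. -/
noncomputable def mpc (c : ℝ) (k : ℕ) : ℝ := if k = 0 then c else 1+c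
/-- Lower recurrence coefficients for `x·Π_k`. -/
noncomputable def rp (c : ℝ) (k : ℕ) : ℝ := if k = 0 then 0 else c

lemma C2c {c : ℝ} : (C (2*c) : ℝ[X]) = 2 * C c := by
  rw [C_mul, show (C (2:ℝ) : ℝ[X]) = 2 by rw [← map_ofNat (C : ℝ →+* ℝ[X]) 2]]

lemma X_mul_Gammat {c : ℝ} (hc : 0 < c) (k : ℕ) :
    X * Gammat c k = Gammat c (k+1) + C (1+c) * Gammat c k + C (rg c k) * Gammat c (k-1) := by
  match k with
  | 0 =>
    rw [Gammat_zero, Gammat_one hc, show rg c 0 = 0 from rfl, C_0]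
    linear_combination X_mul_Vb0 c
  | 1 =>
    rw [Gammat_one hc, Gammat_eq_Vb hc 0, Gammat_zero, show rg c 1 = 2*c from rfl]
    linear_combination X_mul_VbS c 0 - Vb c 0 * C2c
  | 2 =>
    rw [Gammat_eq_Vb hc 0, Gammat_eq_Vb hc 1, Gammat_one hc, show rg c 2 = c from rfl]
    linear_combination X_mul_VbS c 1 - C c * X_mul_Vb0 c
  | (k+3) =>
    rw [show k+3-1 = k+2 from rfl, show rg c (k+3) = c from rfl,
      Gammat_eq_Vb hc (k+1), Gammat_eq_Vb hc (k+2), Gammat_eq_Vb hc k]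
    linear_combination X_mul_VbS c (k+2) - C c * X_mul_VbS c k

lemma X_mul_PiP {c : ℝ} (hc : 0 < c) (k : ℕ) :
    X * PiP c k = PiP c (k+1) + C (mpc c k) * PiP c k + C (rp c k) * PiP c (k-1) := by
  have hC1 : (C (1+c) : ℝ[X]) = 1 + C c := by rw [C_add, C_1]
  match k with
  | 0 =>
    rw [PiP_zero, PiP_eq_Vb hc 0, show mpc c 0 = c from rfl, show rp c 0 = 0 from rfl, C_0]
    linear_combination X_mul_Vb0 c + Vb c 0 * hC1
  | 1 =>
    rw [PiP_eq_Vb hc 1, PiP_eq_Vb hc 0, PiP_zero, show mpc c 1 = 1+c from rfl,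
      show rp c 1 = c from rfl]
    linear_combination X_mul_VbS c 0 + X_mul_Vb0 c
  | (k+2) =>
    rw [show k+2-1 = k+1 from rfl, show mpc c (k+2) = 1+c from rfl,
      show rp c (k+2) = c from rfl,
      PiP_eq_Vb hc (k+2), PiP_eq_Vb hc (k+1), PiP_eq_Vb hc k]
    linear_combination X_mul_VbS c (k+1) + X_mul_VbS c k

/-! ### Generic uniqueness of expansions in a monic graded basis -/

lemma uniq_zero {Q : ℕ → ℝ[X]} (hm : ∀ k, (Q k).Monic) (hd : ∀ k, (Q k).degree = k) :
    ∀ N (d : ℕ → ℝ), (∑ k ∈ Finset.range N, C (d k) * Q k = 0) → ∀ k < N, d k = 0 := by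
  intro N
  induction N with
  | zero => intro d h k hk; omega
  | succ N ih =>
    intro d h
    have hdN : d N = 0 := by
      have hcoeff := congrArg (fun q => Polynomial.coeff q N) h
      simp only [Polynomial.finset_sum_coeff, Polynomial.coeff_zero] at hcoeff
      rw [Finset.sum_range_succ] at hcoeff
      have hz : ∀ k ∈ Finset.range N, (C (d k) * Q k).coeff N = 0 := by
        intro k hk
        apply Polynomial.coeff_eq_zero_of_degree_lt
        calc (C (d k) * Q k).degree ≤ (0 : WithBot ℕ) + k :=
              le_trans (degree_mul_le _ _) (add_le_add degree_C_le (hd k).le)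
          _ < (N : WithBot ℕ) := by
              rw [zero_add]
              exact_mod_cast Finset.mem_range.mp hk
      rw [Finset.sum_eq_zero hz, zero_add] at hcoeff
      have hnd : (Q N).natDegree = N := natDegree_eq_of_degree_eq_some (hd N)
      have hone : (Q N).coeff N = 1 := by
        have := (hm N).coeff_natDegree; rwa [hnd] at this
      rw [Polynomial.coeff_C_mul, hone, mul_one] at hcoeff
      exact hcoeff
    have h' : ∑ k ∈ Finset.range N, C (d k) * Q k = 0 := by
      rw [Finset.sum_range_succ, hdN] at h
      simpa using h
    intro k hk
    rcases Nat.lt_succ_iff_lt_or_eq.mp hk with h1 | h2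
    · exact ih d h' k h1
    · rw [h2]; exact hdN

lemma uniq_eq {Q : ℕ → ℝ[X]} (hm : ∀ k, (Q k).Monic) (hd : ∀ k, (Q k).degree = k)
    (N : ℕ) (a b : ℕ → ℝ)
    (h : ∑ k ∈ Finset.range N, C (a k) * Q k = ∑ k ∈ Finset.range N, C (b k) * Q k) :
    ∀ k < N, a k = b k := by
  have h0 : ∑ k ∈ Finset.range N, C ((fun j => a j - b j) k) * Q k = 0 := by
    simp only [C_sub, sub_mul]
    rw [Finset.sum_sub_distrib, h, sub_self]
  intro k hk
  have := uniq_zero hm hd N _ h0 k hk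
  linarith [this]

/-! ### Rearranging `X * Σ d_k Q_k` using a three-term recurrence -/

lemma sum_shift (Q : ℕ → ℝ[X]) (mid r : ℕ → ℝ)
    (hQ : ∀ k, X * Q k = Q (k+1) + C (mid k) * Q k + C (r k) * Q (k-1))
    (hr0 : r 0 = 0) (n : ℕ) (d : ℕ → ℝ) (hd : ∀ k, n < k → d k = 0) :
    X * (∑ k ∈ Finset.range (n+1), C (d k) * Q k)
      = ∑ k ∈ Finset.range (n+2),
          C ((if k = 0 then 0 else d (k-1)) + mid k * d k + r (k+1) * d (k+1)) * Q k := by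
  have hd1 : d (n+1) = 0 := hd _ (by omega)
  have hd2 : d (n+2) = 0 := hd _ (by omega)
  rw [Finset.mul_sum]
  have step : ∀ k, X * (C (d k) * Q k)
      = C (d k) * Q (k+1) + C (mid k * d k) * Q k + C (r k * d k) * Q (k-1) := by
    intro k
    calc X * (C (d k) * Q k) = C (d k) * (X * Q k) := by ring
      _ = _ := by rw [hQ k, C_mul, C_mul]; ring
  simp only [step]
  rw [Finset.sum_add_distrib, Finset.sum_add_distrib]
  simp only [C_add, add_mul]
  rw [Finset.sum_add_distrib, Finset.sum_add_distrib]
  congr 1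
  congr 1
  · rw [Finset.sum_range_succ' (fun k => C (if k = 0 then 0 else d (k-1)) * Q k) (n+1)]
    simp
  · rw [Finset.sum_range_succ (fun k => C (mid k * d k) * Q k) (n+1), hd1]
    simp
  · rw [Finset.sum_range_succ' (fun k => C (r k * d k) * Q (k-1)) n, hr0]
    simp only [zero_mul, C_0, add_zero]
    rw [Finset.sum_range_succ (fun k => C (r (k+1) * d (k+1)) * Q k) (n+1),
      Finset.sum_range_succ (fun k => C (r (k+1) * d (k+1)) * Q k) n, hd1, hd2]
    simp

/-! ### Conversion of expansions to the `Vb` basis -/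

lemma gamma_to_V {c : ℝ} (hc : 0 < c) (m : ℕ) (d : ℕ → ℝ)
    (hd : ∀ k, m < k → d k = 0) :
    ∑ k ∈ Finset.range (m+1), C (d k) * Gammat c k
      = ∑ k ∈ Finset.range (m+1), C (d k - c * d (k+2)) * Vb c k := by
  set W : ℕ → ℝ[X] := fun k => if k < 2 then 0 else Vb c (k-2) with hW
  have hΓW : ∀ k, Gammat c k = Vb c k - C c * W k := by
    intro k
    match k with
    | 0 => simp [hW, Gammat_zero]
    | 1 => simp [hW, Gammat_one hc]
    | (k+2) =>
      rw [Gammat_eq_Vb hc k]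
      simp [hW]
  simp only [hΓW, mul_sub, C_sub, sub_mul]
  rw [Finset.sum_sub_distrib, Finset.sum_sub_distrib]
  congr 1
  have hpad : ∑ k ∈ Finset.range (m+3), C (d k) * (C c * W k)
      = ∑ k ∈ Finset.range (m+1), C (d k) * (C c * W k) := by
    rw [Finset.sum_range_succ, Finset.sum_range_succ, hd (m+1) (by omega), hd (m+2) (by omega)]
    simp
  rw [← hpad, Finset.sum_range_succ' (fun k => C (d k) * (C c * W k)) (m+2),
    Finset.sum_range_succ' (fun k => C (d (k+1)) * (C c * W (k+1))) (m+1)]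
  have hW0 : W 0 = 0 := by simp [hW]
  have hW1 : W 1 = 0 := by simp [hW]
  rw [hW0, hW1]
  simp only [mul_zero, zero_mul, add_zero]
  apply Finset.sum_congr rfl
  intro k _
  have : W (k+1+1) = Vb c k := by simp [hW]
  rw [this, C_mul]
  ring

lemma pi_to_V {c : ℝ} (hc : 0 < c) (m : ℕ) (d : ℕ → ℝ)
    (hd : ∀ k, m < k → d k = 0) :
    ∑ k ∈ Finset.range (m+1), C (d k) * PiP c k
      = ∑ k ∈ Finset.range (m+1), C (d k + d (k+1)) * Vb c k := by
  set W : ℕ → ℝ[X] := fun k => if k = 0 then 0 else Vb c (k-1) with hW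
  have hPW : ∀ k, PiP c k = Vb c k + W k := by
    intro k
    match k with
    | 0 => simp [hW, PiP_zero]
    | (k+1) => rw [PiP_eq_Vb hc k]; simp [hW]
  simp only [hPW, mul_add, C_add, add_mul]
  rw [Finset.sum_add_distrib, Finset.sum_add_distrib]
  congr 1
  have hpad : ∑ k ∈ Finset.range (m+2), C (d k) * W k
      = ∑ k ∈ Finset.range (m+1), C (d k) * W k := by
    rw [Finset.sum_range_succ, hd (m+1) (by omega)]
    simp
  rw [← hpad, Finset.sum_range_succ' (fun k => C (d k) * W k) (m+1)]
  have hW0 : W 0 = 0 := by simp [hW]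
  rw [hW0]
  simp only [mul_zero, add_zero]
  apply Finset.sum_congr rfl
  intro k _
  have : W (k+1) = Vb c k := by simp [hW]
  rw [this]

/-! ### Monicity and degrees of the bases -/

lemma md_add {p q : Polynomial ℝ} {N : ℕ} (hp : p.Monic) (hpd : p.degree = N)
    (hq : q.degree < (N : WithBot ℕ)) : (p + q).Monic ∧ (p + q).degree = N := by
  have h : q.degree < p.degree := by rw [hpd]; exact hq
  exact ⟨hp.add_of_left h, by rw [degree_add_eq_left_of_degree_lt h, hpd]⟩

lemma Gammat_md {c : ℝ} (hc : 0 < c) (k : ℕ) :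
    (Gammat c k).Monic ∧ (Gammat c k).degree = k := by
  match k with
  | 0 => rw [Gammat_zero]; exact Vb_monic c 0
  | 1 => rw [Gammat_one hc]; exact Vb_monic c 1
  | (k+2) =>
    rw [Gammat_eq_Vb hc k, sub_eq_add_neg]
    refine md_add (Vb_monic c (k+2)).1 (Vb_monic c (k+2)).2 ?_
    rw [degree_neg]
    calc (C c * Vb c k).degree ≤ (0 : WithBot ℕ) + k :=
          le_trans (degree_mul_le _ _) (add_le_add degree_C_le (Vb_monic c k).2.le)
      _ < ((k+2 : ℕ) : WithBot ℕ) := by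
          rw [zero_add]; exact_mod_cast (by omega : k < k + 2)

lemma PiP_md {c : ℝ} (hc : 0 < c) (k : ℕ) :
    (PiP c k).Monic ∧ (PiP c k).degree = k := by
  match k with
  | 0 => rw [PiP_zero]; exact Vb_monic c 0
  | (k+1) =>
    rw [PiP_eq_Vb hc k]
    refine md_add (Vb_monic c (k+1)).1 (Vb_monic c (k+1)).2 ?_
    rw [(Vb_monic c k).2]
    exact_mod_cast (by omega : k < k + 1)

theorem stmt7 (c : ℝ) (hc : 0 < c) (g p : ℕ → ℕ → ℝ)
    (hgexp : ∀ n : ℕ,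
      (X ^ n : Polynomial ℝ) = ∑ k ∈ Finset.range (n + 1), C (g n k) * Gammat c k)
    (hgzero : ∀ n k : ℕ, n < k → g n k = 0)
    (hpexp : ∀ n : ℕ,
      (X ^ n : Polynomial ℝ) = ∑ k ∈ Finset.range (n + 1), C (p n k) * PiP c k) :
    ∀ n : ℕ,
      PowerSeries.C (R := ℝ) (c ^ n) * PowerSeries.mk (fun m => g m n) =
        (PowerSeries.mk (fun m => p m 0) - 1) ^ n * PowerSeries.mk (fun m => g m 0) := by
  classical
  have hVm : ∀ k, (Vb c k).Monic := fun k => (Vb_monic c k).1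
  have hVd : ∀ k, (Vb c k).degree = k := fun k => (Vb_monic c k).2
  have hGm : ∀ k, (Gammat c k).Monic := fun k => (Gammat_md hc k).1
  have hGd : ∀ k, (Gammat c k).degree = k := fun k => (Gammat_md hc k).2
  have hPm : ∀ k, (PiP c k).Monic := fun k => (PiP_md hc k).1
  have hPd : ∀ k, (PiP c k).degree = k := fun k => (PiP_md hc k).2
  -- the recurrence for g
  have gcoef : ∀ n k, k < n+2 → g (n+1) k =
      (if k = 0 then 0 else g n (k-1)) + (1+c) * g n k + rg c (k+1) * g n (k+1) := by
    intro n
    have hsum := sum_shift (Gammat c) (fun _ => 1+c) (rg c) (X_mul_Gammat hc) rfl n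
      (g n) (hgzero n)
    have heq : ∑ k ∈ Finset.range (n+2), C (g (n+1) k) * Gammat c k
        = ∑ k ∈ Finset.range (n+2),
            C ((if k = 0 then 0 else g n (k-1)) + (1+c) * g n k + rg c (k+1) * g n (k+1))
              * Gammat c k := by
      calc ∑ k ∈ Finset.range (n+2), C (g (n+1) k) * Gammat c k
          = (X^(n+1) : Polynomial ℝ) := (hgexp (n+1)).symm
        _ = X * X^n := by ring
        _ = X * ∑ k ∈ Finset.range (n+1), C (g n k) * Gammat c k := by rw [← hgexp n]
        _ = _ := hsum
    exact fun k hk => uniq_eq hGm hGd (n+2) _ _ heq k hk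
  have gRec0 : ∀ n, g (n+1) 0 = (1+c) * g n 0 + 2*c * g n 1 := by
    intro n
    have h := gcoef n 0 (by omega)
    rw [if_pos rfl, show rg c 1 = 2*c from rfl] at h
    linarith [h]
  have gRecS : ∀ n k, g (n+1) (k+1) = g n k + (1+c) * g n (k+1) + c * g n (k+2) := by
    intro n k
    by_cases hk : k+1 < n+2
    · have h := gcoef n (k+1) hk
      rw [if_neg (Nat.succ_ne_zero k), show rg c (k+2) = c from rfl] at h
      simpa using h
    · rw [hgzero (n+1) (k+1) (by omega), hgzero n k (by omega), hgzero n (k+1) (by omega),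
        hgzero n (k+2) (by omega)]
      ring
  -- truncated p coefficients
  set dp : ℕ → ℕ → ℝ := fun n k => if k ≤ n then p n k else 0 with hdp
  have hdpz : ∀ n k, n < k → dp n k = 0 := by
    intro n k h; simp only [hdp]; rw [if_neg (by omega)]
  have hpexp' : ∀ n, (X^n : Polynomial ℝ)
      = ∑ k ∈ Finset.range (n+1), C (dp n k) * PiP c k := by
    intro n
    rw [hpexp n]
    refine Finset.sum_congr rfl fun k hk => ?_
    have hkn : k ≤ n := by have := Finset.mem_range.mp hk; omega
    simp only [hdp]; rw [if_pos hkn]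
  have pRec0 : ∀ n, p (n+1) 0 = c * p n 0 + c * dp n 1 := by
    intro n
    have hsum := sum_shift (PiP c) (mpc c) (rp c) (X_mul_PiP hc) rfl n (dp n) (hdpz n)
    have heq : ∑ k ∈ Finset.range (n+2), C (dp (n+1) k) * PiP c k
        = ∑ k ∈ Finset.range (n+2),
            C ((if k = 0 then 0 else dp n (k-1)) + mpc c k * dp n k + rp c (k+1) * dp n (k+1))
              * PiP c k := by
      calc ∑ k ∈ Finset.range (n+2), C (dp (n+1) k) * PiP c k
          = (X^(n+1) : Polynomial ℝ) := (hpexp' (n+1)).symm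
        _ = X * X^n := by ring
        _ = X * ∑ k ∈ Finset.range (n+1), C (dp n k) * PiP c k := by rw [← hpexp' n]
        _ = _ := hsum
    have h0 := uniq_eq hPm hPd (n+2) _ _ heq 0 (by omega)
    rw [if_pos rfl, show mpc c 0 = c from rfl, show rp c 1 = c from rfl] at h0
    have e1 : dp (n+1) 0 = p (n+1) 0 := by simp only [hdp]; rw [if_pos (by omega)]
    have e2 : dp n 0 = p n 0 := by simp only [hdp]; rw [if_pos (by omega)]
    rw [e1, e2] at h0
    linarith [h0]
  -- bridge between g and p expansions, via the Vb basis
  have bridge : ∀ m, g m 0 - c * g m 2 = dp m 0 + dp m 1 := by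
    intro m
    have heq : ∑ k ∈ Finset.range (m+1), C (g m k - c * g m (k+2)) * Vb c k
        = ∑ k ∈ Finset.range (m+1), C (dp m k + dp m (k+1)) * Vb c k := by
      calc ∑ k ∈ Finset.range (m+1), C (g m k - c * g m (k+2)) * Vb c k
          = ∑ k ∈ Finset.range (m+1), C (g m k) * Gammat c k :=
            (gamma_to_V hc m (g m) (hgzero m)).symm
        _ = (X^m : Polynomial ℝ) := (hgexp m).symm
        _ = ∑ k ∈ Finset.range (m+1), C (dp m k) * PiP c k := hpexp' m
        _ = _ := pi_to_V hc m (dp m) (hdpz m)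
    exact uniq_eq hVm hVd (m+1) _ _ heq 0 (by omega)
  -- initial values
  have g00 : g 0 0 = 1 := by
    have heq : ∑ k ∈ Finset.range 1, C (g 0 k) * Gammat c k
        = ∑ k ∈ Finset.range 1, C ((fun _ => (1:ℝ)) k) * Gammat c k := by
      rw [← hgexp 0]
      simp [Gammat_zero, Vb]
    exact uniq_eq hGm hGd 1 _ _ heq 0 (by omega)
  have p00 : p 0 0 = 1 := by
    have heq : ∑ k ∈ Finset.range 1, C (p 0 k) * PiP c k
        = ∑ k ∈ Finset.range 1, C ((fun _ => (1:ℝ)) k) * PiP c k := by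
      rw [← hpexp 0]
      simp [PiP_zero, Vb]
    exact uniq_eq hPm hPd 1 _ _ heq 0 (by omega)
  have aux : ∀ m, p (m+1) 0 = c * g m 0 - c^2 * g m 2 := by
    intro m
    have e2 : dp m 0 = p m 0 := by simp only [hdp]; rw [if_pos (by omega)]
    calc p (m+1) 0 = c * p m 0 + c * dp m 1 := pRec0 m
      _ = c * (dp m 0 + dp m 1) := by rw [e2]; ring
      _ = c * (g m 0 - c * g m 2) := by rw [← bridge m]
      _ = c * g m 0 - c^2 * g m 2 := by ring
  -- the key convolution identity
  have key : ∀ m n, c * g m (n+1)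
      = ∑ j ∈ Finset.range (m+1), (if j = 0 then 0 else p j 0) * g (m-j) n := by
    intro m
    induction m with
    | zero =>
      intro n
      rw [hgzero 0 (n+1) (by omega)]
      simp
    | succ m ih =>
      intro n
      rw [Finset.sum_range_succ]
      match n with
      | 0 =>
        have hcong : ∀ j ∈ Finset.range (m+1),
            (if j = 0 then 0 else p j 0) * g (m+1-j) 0
            = (1+c) * ((if j = 0 then 0 else p j 0) * g (m-j) 0)
              + 2*c*((if j = 0 then 0 else p j 0) * g (m-j) 1) := by
          intro j hj
          have hj' : j ≤ m := by have := Finset.mem_range.mp hj; omega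
          rw [show m+1-j = (m-j)+1 by omega, gRec0 (m-j)]
          ring
        rw [Finset.sum_congr rfl hcong, Finset.sum_add_distrib,
          ← Finset.mul_sum, ← Finset.mul_sum, ← ih 0, ← ih 1,
          show (m+1) - (m+1) = 0 by omega, g00,
          if_neg (Nat.succ_ne_zero m), aux m, gRecS m 0]
        ring
      | (n+1) =>
        have hcong : ∀ j ∈ Finset.range (m+1),
            (if j = 0 then 0 else p j 0) * g (m+1-j) (n+1)
            = (if j = 0 then 0 else p j 0) * g (m-j) n
              + (1+c) * ((if j = 0 then 0 else p j 0) * g (m-j) (n+1))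
              + c * ((if j = 0 then 0 else p j 0) * g (m-j) (n+2)) := by
          intro j hj
          have hj' : j ≤ m := by have := Finset.mem_range.mp hj; omega
          rw [show m+1-j = (m-j)+1 by omega, gRecS (m-j) n]
          ring
        rw [Finset.sum_congr rfl hcong, Finset.sum_add_distrib, Finset.sum_add_distrib,
          ← Finset.mul_sum, ← Finset.mul_sum, ← ih n, ← ih (n+1), ← ih (n+2),
          show (m+1) - (m+1) = 0 by omega, hgzero 0 (n+1) (by omega),
          gRecS m (n+1)]
        ring
  -- power series step
  have step : ∀ n, (PowerSeries.mk (fun m => p m 0) - 1) * PowerSeries.mk (fun m => g m n)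
      = PowerSeries.C (R := ℝ) c * PowerSeries.mk (fun m => g m (n+1)) := by
    intro n
    ext m
    rw [PowerSeries.coeff_mul, Finset.Nat.sum_antidiagonal_eq_sum_range_succ_mk]
    have hcong : ∀ j ∈ Finset.range (m+1),
        (PowerSeries.coeff (R := ℝ) j) (PowerSeries.mk (fun m => p m 0) - 1)
          * (PowerSeries.coeff (R := ℝ) (m-j)) (PowerSeries.mk fun m => g m n)
        = (if j = 0 then 0 else p j 0) * g (m-j) n := by
      intro j hj
      rw [map_sub, PowerSeries.coeff_mk, PowerSeries.coeff_mk, PowerSeries.coeff_one]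
      by_cases h : j = 0
      · subst h; simp [p00]
      · simp [h]
    rw [Finset.sum_congr rfl hcong, ← key m n]
    rw [show (PowerSeries.C (R := ℝ) c) * PowerSeries.mk (fun m => g m (n+1))
        = c • PowerSeries.mk (fun m => g m (n+1)) from (PowerSeries.smul_eq_C_mul _ _).symm]
    rw [PowerSeries.coeff_smul, PowerSeries.coeff_mk]
    rfl
  intro n
  induction n with
  | zero => simp
  | succ n ih =>
    calc PowerSeries.C (R := ℝ) (c^(n+1)) * PowerSeries.mk (fun m => g m (n+1))
        = PowerSeries.C (R := ℝ) (c^n) * (PowerSeries.C (R := ℝ) c * PowerSeries.mk (fun m => g m (n+1))) := by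
          rw [← mul_assoc, ← map_mul]; ring_nf
      _ = PowerSeries.C (R := ℝ) (c^n) * ((PowerSeries.mk (fun m => p m 0) - 1)
            * PowerSeries.mk (fun m => g m n)) := by rw [step n]
      _ = (PowerSeries.mk (fun m => p m 0) - 1)
            * (PowerSeries.C (R := ℝ) (c^n) * PowerSeries.mk (fun m => g m n)) := by ring
      _ = (PowerSeries.mk (fun m => p m 0) - 1)
            * ((PowerSeries.mk (fun m => p m 0) - 1)^n * PowerSeries.mk (fun m => g m 0)) := by
          rw [ih]
      _ = (PowerSeries.mk (fun m => p m 0) - 1)^(n+1) * PowerSeries.mk (fun m => g m 0) := by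
          ring
end

section
/- Let π be a non-crossing permutation of [m], let B be an orbit of π and B̄ an orbit of the Kreweras complement π^c = γ_m π⁻¹ such that B ∩ B̄ ≠ ∅. Then B ∩ B̄ contains exactly one element. -/
/-- The number of orbits of a permutation of `Fin n` (fixed points counted):
the number of nontrivial cycles plus the number of fixed points. -/
def numOrbits {n : ℕ} (σ : Equiv.Perm (Fin n)) : ℕ :=
  σ.cycleType.card + (Finset.univ.filter fun x => σ x = x).card

/-- A permutation `π` of `[m]` is non-crossing if `#(π) + #(γ_m π⁻¹) = m + 1`,
where `γ_m` is the cycle `(1,2,…,m)` (here `finRotate m`). -/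
def IsNC {m : ℕ} (π : Equiv.Perm (Fin m)) : Prop :=
  numOrbits π + numOrbits (finRotate m * π⁻¹) = m + 1

/-- `B` is an orbit of the permutation `σ`. -/
def IsBlock {m : ℕ} (σ : Equiv.Perm (Fin m)) (B : Set (Fin m)) : Prop :=
  ∃ x, B = {y | σ.SameCycle x y}

open Equiv Equiv.Perm Finset

def orbSetoid {m : ℕ} (σ : Equiv.Perm (Fin m)) : Setoid (Fin m) :=
  ⟨σ.SameCycle, ⟨Equiv.Perm.SameCycle.refl σ, fun h => h.symm, fun h h' => h.trans h'⟩⟩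

abbrev Orb {m : ℕ} (σ : Equiv.Perm (Fin m)) := Quotient (orbSetoid σ)

instance {m : ℕ} (σ : Equiv.Perm (Fin m)) : Fintype (Orb σ) :=
  @Quotient.fintype _ _ (orbSetoid σ) (fun a b => (inferInstance : DecidableRel σ.SameCycle) a b)

theorem sameCycle_fixed {m : ℕ} {σ : Equiv.Perm (Fin m)} {a b : Fin m}
    (h : σ.SameCycle a b) (ha : σ a = a) : a = b := by
  obtain ⟨i, hi⟩ := h
  rw [← hi, Equiv.Perm.zpow_apply_eq_self_of_apply_eq_self ha]

theorem numOrbits_eq_card_orb {m : ℕ} (σ : Equiv.Perm (Fin m)) :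
    numOrbits σ = Fintype.card (Orb σ) := by
  classical
  set G : Orb σ → ({x : Fin m // σ x = x} ⊕ {c // c ∈ σ.cycleFactorsFinset}) :=
    Quotient.lift
      (fun z => if h : σ z = z then Sum.inl ⟨z, h⟩
        else Sum.inr ⟨σ.cycleOf z, Equiv.Perm.cycleOf_mem_cycleFactorsFinset_iff.2
          (Equiv.Perm.mem_support.2 h)⟩)
      (by
        intro a b hab
        by_cases ha : σ a = a
        · obtain rfl := sameCycle_fixed hab ha
          rfl
        · by_cases hb : σ b = b
          · obtain rfl := sameCycle_fixed hab.symm hb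
            exact absurd hb ha
          · simp only [ha, hb, dif_neg, not_false_iff]
            exact congrArg _ (Subtype.ext hab.cycleOf_eq)) with hG
  have hGbij : Function.Bijective G := by
    constructor
    · intro q1 q2
      refine Quotient.inductionOn₂ q1 q2 ?_
      intro a b h
      simp only [hG, Quotient.lift_mk] at h
      by_cases ha : σ a = a <;> by_cases hb : σ b = b <;>
        simp only [ha, hb, dif_pos, dif_neg, not_false_iff] at h
      · exact Quotient.sound (by cases Subtype.mk.injEq .. ▸ Sum.inl.inj h; exact Equiv.Perm.SameCycle.refl σ a)
      · exact absurd h (by simp)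
      · exact absurd h (by simp)
      · apply Quotient.sound
        have hcc : σ.cycleOf a = σ.cycleOf b := Subtype.mk.injEq .. ▸ Sum.inr.inj h
        have : b ∈ (σ.cycleOf a).support := by
          rw [hcc]
          exact (Equiv.Perm.mem_support_cycleOf_iff' hb).2 (Equiv.Perm.SameCycle.refl σ b)
        exact ((Equiv.Perm.mem_support_cycleOf_iff).1 this).1
    · rintro (⟨x, hx⟩ | ⟨c, hc⟩)
      · exact ⟨⟦x⟧, by simp [hG, hx]⟩
      · have hcyc := (Equiv.Perm.mem_cycleFactorsFinset_iff.1 hc).1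
        obtain ⟨z, hz⟩ := hcyc.nonempty_support
        have hz2 : σ z ≠ z := by
          have := (Equiv.Perm.mem_cycleFactorsFinset_iff.1 hc).2 z hz
          rw [← this]
          exact Equiv.Perm.mem_support.1 hz
        refine ⟨⟦z⟧, ?_⟩
        simp only [hG, Quotient.lift_mk, hz2, dif_neg, not_false_iff]
        exact congrArg _ (Subtype.ext (Equiv.Perm.cycle_is_cycleOf hz hc).symm)
  have := Fintype.card_of_bijective hGbij
  rw [this, Fintype.card_sum, Fintype.card_subtype, Fintype.card_coe]
  unfold numOrbits
  rw [Equiv.Perm.cycleType_def, Multiset.card_map]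
  rw [Nat.add_comm]
  rfl

def Vspan {m : ℕ} (σ : Equiv.Perm (Fin m)) : Submodule ℚ (Fin m → ℚ) :=
  Submodule.span ℚ (Set.range fun x => Pi.single x 1 - Pi.single (σ x) 1)

theorem single_sub_mem_V {m : ℕ} {σ : Equiv.Perm (Fin m)} {a b : Fin m}
    (h : σ.SameCycle a b) :
    (Pi.single a 1 - Pi.single b 1 : Fin m → ℚ) ∈ Vspan σ := by
  obtain ⟨k, -, hk⟩ := h.exists_pow_eq'
  suffices haux : ∀ (k : ℕ) (a : Fin m),
      (Pi.single a 1 - Pi.single ((σ ^ k) a) 1 : Fin m → ℚ) ∈ Vspan σ by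
    rw [← hk]; exact haux k a
  intro k
  induction k with
  | zero => intro a; simp
  | succ k ih =>
    intro a
    have hstep : (Pi.single a 1 - Pi.single ((σ ^ (k+1)) a) 1 : Fin m → ℚ)
        = (Pi.single a 1 - Pi.single ((σ ^ k) a) 1)
          + (Pi.single ((σ ^ k) a) 1 - Pi.single (σ ((σ ^ k) a)) 1) := by
      rw [pow_succ', Equiv.Perm.mul_apply]; abel
    rw [hstep]
    exact Submodule.add_mem _ (ih a) (Submodule.subset_span ⟨(σ ^ k) a, rfl⟩)

theorem Vspan_mul_le {m : ℕ} (σ τ : Equiv.Perm (Fin m)) :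
    Vspan (σ * τ) ≤ Vspan σ ⊔ Vspan τ := by
  rw [Vspan, Submodule.span_le]
  rintro _ ⟨x, rfl⟩
  have h : (Pi.single x 1 - Pi.single ((σ * τ) x) 1 : Fin m → ℚ)
      = (Pi.single x 1 - Pi.single (τ x) 1)
        + (Pi.single (τ x) 1 - Pi.single (σ (τ x)) 1) := by
    rw [Equiv.Perm.mul_apply]; abel
  show (Pi.single x 1 - Pi.single ((σ * τ) x) 1 : Fin m → ℚ) ∈ (Vspan σ ⊔ Vspan τ : Submodule ℚ _)
  rw [h]
  exact Submodule.add_mem _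
    (Submodule.mem_sup_right (Submodule.subset_span ⟨x, rfl⟩))
    (Submodule.mem_sup_left (Submodule.subset_span ⟨τ x, rfl⟩))

theorem finrank_V_add_numOrbits {m : ℕ} (σ : Equiv.Perm (Fin m)) :
    Module.finrank ℚ (Vspan σ) + numOrbits σ = m := by
  classical
  set Φ : (Fin m → ℚ) →ₗ[ℚ] (Orb σ → ℚ) :=
    { toFun := fun f c => ∑ z ∈ Finset.univ.filter (fun z => (⟦z⟧ : Orb σ) = c), f z
      map_add' := by intro f g; funext c; simp [Finset.sum_add_distrib]
      map_smul' := by intro r f; funext c; simp [Finset.mul_sum] } with hΦdef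
  have hΦapp : ∀ (f : Fin m → ℚ) (c : Orb σ),
      Φ f c = ∑ z ∈ Finset.univ.filter (fun z => (⟦z⟧ : Orb σ) = c), f z := fun f c => rfl
  have hsingle : ∀ (x : Fin m) (c : Orb σ),
      Φ (Pi.single x 1) c = if (⟦x⟧ : Orb σ) = c then 1 else 0 := by
    intro x c
    rw [hΦapp]
    simp only [Pi.single_apply]
    rw [Finset.sum_ite_eq' (Finset.univ.filter (fun z => (⟦z⟧ : Orb σ) = c)) x fun _ => (1:ℚ)]
    simp
  have hsinglesub : ∀ (a b : Fin m), (⟦a⟧ : Orb σ) = ⟦b⟧ →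
      Φ (Pi.single a 1 - Pi.single b 1) = 0 := by
    intro a b hab
    funext c
    rw [map_sub]
    simp only [Pi.sub_apply, hsingle, hab, Pi.zero_apply]
    simp
  have hker : LinearMap.ker Φ = Vspan σ := by
    apply le_antisymm
    · -- the hard direction
      intro f hf
      rw [LinearMap.mem_ker] at hf
      have key : ∀ (n : ℕ) (f : Fin m → ℚ),
          (Finset.univ.filter fun z => f z ≠ 0).card ≤ n → Φ f = 0 → f ∈ Vspan σ := by
        intro n
        induction n with
        | zero =>
          intro f hcard _
          have hf0 : f = 0 := by
            funext z
            simp only [Pi.zero_apply]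
            by_contra hz
            have : z ∈ Finset.univ.filter fun z => f z ≠ 0 := by simp [hz]
            have := Finset.card_pos.2 ⟨z, this⟩
            omega
          rw [hf0]; exact Submodule.zero_mem _
        | succ n ih =>
          intro f hcard hΦf
          by_cases hf0 : f = 0
          · rw [hf0]; exact Submodule.zero_mem _
          · obtain ⟨a, ha⟩ : ∃ a, f a ≠ 0 := by
              by_contra hcon
              push_neg at hcon
              exact hf0 (funext hcon)
            have hsum : ∑ z ∈ Finset.univ.filter (fun z => (⟦z⟧ : Orb σ) = ⟦a⟧), f z = 0 := by
              rw [← hΦapp, hΦf]; rfl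
            obtain ⟨b, hba, hclass, hfb⟩ :
                ∃ b, b ≠ a ∧ (⟦b⟧ : Orb σ) = ⟦a⟧ ∧ f b ≠ 0 := by
              by_contra hcon
              push_neg at hcon
              have : ∑ z ∈ Finset.univ.filter (fun z => (⟦z⟧ : Orb σ) = ⟦a⟧), f z = f a := by
                apply Finset.sum_eq_single a
                · intro z hz hza
                  rw [Finset.mem_filter] at hz
                  by_contra hfz
                  exact hfz (hcon z hza hz.2)
                · intro h
                  have : a ∈ Finset.univ.filter (fun z => (⟦z⟧ : Orb σ) = ⟦a⟧) :=
                    Finset.mem_filter.2 ⟨Finset.mem_univ a, (rfl : (⟦a⟧ : Orb σ) = ⟦a⟧)⟩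
                  exact absurd this h
              rw [hsum] at this
              exact ha this.symm
            set g : Fin m → ℚ := Pi.single a 1 - Pi.single b 1 with hg
            have hgmem : g ∈ Vspan σ := single_sub_mem_V (Quotient.exact hclass.symm)
            set f' : Fin m → ℚ := f + (f b) • g with hf'
            have hf'b : f' b = 0 := by
              simp [hf', hg, Pi.single_apply, hba.symm, hba]
            have hf'z : ∀ z, z ≠ a → z ≠ b → f' z = f z := by
              intro z hza hzb
              simp [hf', hg, Pi.single_apply, hza, hzb]
            have hcard' : (Finset.univ.filter fun z => f' z ≠ 0).card ≤ n := by
              have hsub : (Finset.univ.filter fun z => f' z ≠ 0) ⊆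
                  (Finset.univ.filter fun z => f z ≠ 0).erase b := by
                intro z hz
                rw [Finset.mem_filter] at hz
                rw [Finset.mem_erase, Finset.mem_filter]
                have hzb : z ≠ b := by rintro rfl; exact hz.2 hf'b
                refine ⟨hzb, Finset.mem_univ z, ?_⟩
                by_cases hza : z = a
                · subst hza; exact ha
                · rw [← hf'z z hza hzb]; exact hz.2
              have hbmem : b ∈ Finset.univ.filter fun z => f z ≠ 0 := by simp [hfb]
              have := Finset.card_le_card hsub
              rw [Finset.card_erase_of_mem hbmem] at this
              omega
            have hΦf' : Φ f' = 0 := by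
              rw [hf', map_add, map_smul, hΦf, hg, hsinglesub a b hclass.symm]
              simp
            have hf'mem : f' ∈ Vspan σ := ih f' hcard' hΦf'
            have : f = f' - (f b) • g := by rw [hf']; abel
            rw [this]
            exact Submodule.sub_mem _ hf'mem (Submodule.smul_mem _ _ hgmem)
      exact key _ f le_rfl hf
    · rw [Vspan, Submodule.span_le]
      rintro _ ⟨x, rfl⟩
      show (Pi.single x 1 - Pi.single (σ x) 1 : Fin m → ℚ) ∈ (LinearMap.ker Φ : Submodule ℚ _)
      rw [LinearMap.mem_ker]
      exact hsinglesub x (σ x) (Quotient.sound ⟨1, rfl⟩)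
  have hrange : LinearMap.range Φ = ⊤ := by
    rw [LinearMap.range_eq_top]
    intro g
    refine ⟨fun z => if z = (⟦z⟧ : Orb σ).out then g ⟦z⟧ else 0, ?_⟩
    funext c
    rw [hΦapp]
    rw [Finset.sum_eq_single c.out]
    · have h1 : (⟦c.out⟧ : Orb σ) = c := Quotient.out_eq c
      simp [h1]
    · intro z hz hzc
      rw [Finset.mem_filter] at hz
      rw [if_neg]
      intro hzo
      exact hzc (by rw [hzo, hz.2])
    · intro hc
      have : c.out ∈ Finset.univ.filter (fun z => (⟦z⟧ : Orb σ) = c) :=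
        Finset.mem_filter.2 ⟨Finset.mem_univ _, Quotient.out_eq c⟩
      exact absurd this hc
  have hrn := LinearMap.finrank_range_add_finrank_ker Φ
  rw [hker, hrange, finrank_top, Module.finrank_pi, Module.finrank_pi, Fintype.card_fin] at hrn
  rw [numOrbits_eq_card_orb]
  omega

open Fin.NatCast Fin.CommRing in
theorem sameCycle_finRotate_all {n : ℕ} (a b : Fin (n + 1)) :
    (finRotate (n + 1)).SameCycle a b := by
  have hpow : ∀ (k : ℕ) (a : Fin (n + 1)), ((finRotate (n + 1)) ^ k) a = a + (k : Fin (n + 1)) := by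
    intro k
    induction k with
    | zero => intro a; simp
    | succ k ih =>
      intro a
      rw [pow_succ', Equiv.Perm.mul_apply, ih, finRotate_succ_apply]
      push_cast
      ring
  refine ⟨((b - a).val : ℤ), ?_⟩
  rw [zpow_natCast, hpow]
  rw [Fin.cast_val_eq_self]
  ring

theorem numOrbits_finRotate {n : ℕ} : numOrbits (finRotate (n + 1)) = 1 := by
  rw [numOrbits_eq_card_orb, Fintype.card_eq_one_iff]
  refine ⟨⟦0⟧, ?_⟩
  intro q
  induction q using Quotient.inductionOn with
  | h b => exact Quotient.sound (sameCycle_finRotate_all b 0)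

theorem stmt9 (m : ℕ) (π : Equiv.Perm (Fin m)) (hπ : IsNC π)
    (B Bbar : Set (Fin m)) (hB : IsBlock π B)
    (hBbar : IsBlock (finRotate m * π⁻¹) Bbar)
    (hne : (B ∩ Bbar).Nonempty) :
    ∃! x, x ∈ B ∩ Bbar := by
  obtain ⟨x₀, hx₀⟩ := hne
  refine ⟨x₀, hx₀, ?_⟩
  intro y hy
  by_contra hxy
  set πc := finRotate m * π⁻¹ with hπc
  obtain ⟨bB, hBdef⟩ := hB
  obtain ⟨bC, hCdef⟩ := hBbar
  have h1 : π.SameCycle y x₀ := by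
    have hy' : π.SameCycle bB y := by have := hy.1; rwa [hBdef] at this
    have hx' : π.SameCycle bB x₀ := by have := hx₀.1; rwa [hBdef] at this
    exact hy'.symm.trans hx'
  have h2 : πc.SameCycle y x₀ := by
    have hy' : πc.SameCycle bC y := by have := hy.2; rwa [hCdef] at this
    have hx' : πc.SameCycle bC x₀ := by have := hx₀.2; rwa [hCdef] at this
    exact hy'.symm.trans hx'
  obtain ⟨n, rfl⟩ : ∃ n, m = n + 1 := by
    cases m with
    | zero => exact x₀.elim0
    | succ n => exact ⟨n, rfl⟩
  set v : Fin (n + 1) → ℚ := Pi.single y 1 - Pi.single x₀ 1 with hv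
  have hv0 : v ≠ 0 := by
    intro h
    have : v y = 0 := by rw [h]; rfl
    rw [hv] at this
    simp [Pi.single_apply, Ne.symm hxy] at this
  have hvπ : v ∈ Vspan π := single_sub_mem_V h1
  have hvc : v ∈ Vspan πc := single_sub_mem_V h2
  have hinf : 1 ≤ Module.finrank ℚ (Vspan π ⊓ Vspan πc : Submodule ℚ _) := by
    rw [Submodule.one_le_finrank_iff]
    intro hbot
    have : v ∈ (⊥ : Submodule ℚ (Fin (n + 1) → ℚ)) := hbot ▸ Submodule.mem_inf.2 ⟨hvπ, hvc⟩
    exact hv0 (Submodule.mem_bot ℚ |>.1 this)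
  have hγ : πc * π = finRotate (n + 1) := by
    rw [hπc]; group
  have hsup : Module.finrank ℚ (Vspan (finRotate (n + 1))) ≤
      Module.finrank ℚ (Vspan πc ⊔ Vspan π : Submodule ℚ _) := by
    apply Submodule.finrank_mono
    rw [← hγ]
    exact Vspan_mul_le πc π
  have hdim := Submodule.finrank_sup_add_finrank_inf_eq (Vspan πc) (Vspan π)
  have e1 := finrank_V_add_numOrbits π
  have e2 := finrank_V_add_numOrbits πc
  have e3 := finrank_V_add_numOrbits (finRotate (n + 1))
  rw [numOrbits_finRotate] at e3
  have hNC : numOrbits π + numOrbits πc = (n + 1) + 1 := hπ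
  have hinf' : Module.finrank ℚ (Vspan πc ⊓ Vspan π : Submodule ℚ _) =
      Module.finrank ℚ (Vspan π ⊓ Vspan πc : Submodule ℚ _) := by rw [inf_comm]
  omega
end

section
/- Let b_1 < b_2 < ⋯ < b_k < c_1 < c_2 < ⋯ < c_l be distinct points, let D be the permutation with the single cycle (b_1, b_2, …, b_k, c_1, c_2, …, c_l), let 1 ≤ i_1 < i_2 < ⋯ < i_t ≤ k and l ≥ j_1 > j_2 > ⋯ > j_t ≥ 1. Then for all r ≠ s in {1,…,t}, the points b_{i_s} and c_{j_s} lie in the same cycle of the permutation (b_{i_r}, c_{j_r})·D (the transposition (b_{i_r}, c_{j_r}) composed with D). -/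
private lemma chainSC {α : Type*} (σ : Equiv.Perm α) (f : ℕ → α) (m : ℕ) :
    ∀ n, m ≤ n → (∀ i, m ≤ i → i < n → σ (f i) = f (i + 1)) →
      σ.SameCycle (f m) (f n) := by
  intro n
  induction n with
  | zero => intro h _; interval_cases m; exact Equiv.Perm.SameCycle.refl _ _
  | succ n ih =>
    intro hmn hstep
    rcases Nat.lt_or_ge m (n+1) with h | h
    · have h1 : σ.SameCycle (f m) (f n) :=
        ih (by omega) (fun i h1 h2 => hstep i h1 (by omega))
      have h2 : σ (f n) = f (n+1) := hstep n (by omega) (by omega)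
      exact h1.trans ⟨1, by simpa using h2⟩
    · have : m = n + 1 := by omega
      subst this; exact Equiv.Perm.SameCycle.refl _ _

theorem stmt12 {α : Type*} [LinearOrder α] (k l t : ℕ)
    (b : Fin k → α) (c : Fin l → α) (hb : StrictMono b) (hc : StrictMono c)
    (hbc : ∀ (i : Fin k) (j : Fin l), b i < c j)
    (I : Fin t → Fin k) (J : Fin t → Fin l)
    (hI : StrictMono I) (hJ : StrictAnti J)
    (r s : Fin t) (hrs : r ≠ s) :
    (Equiv.swap (b (I r)) (c (J r)) *
        List.formPerm (List.ofFn b ++ List.ofFn c)).SameCycle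
      (b (I s)) (c (J s)) := by
  set L : List α := List.ofFn b ++ List.ofFn c with hL
  have hlen : L.length = k + l := by simp [hL]
  have hk : 0 < k := (I r).pos
  have hl : 0 < l := (J r).pos
  have hn : 0 < k + l := by omega
  have hnodup : L.Nodup := by
    refine List.Nodup.append ?_ ?_ ?_
    · exact List.nodup_ofFn.mpr hb.injective
    · exact List.nodup_ofFn.mpr hc.injective
    · intro x hx hy
      obtain ⟨i, rfl⟩ := List.mem_ofFn.mp hx
      obtain ⟨j, hj⟩ := List.mem_ofFn.mp hy
      exact absurd hj (hbc i j).ne'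
  have hgetb : ∀ (i : ℕ) (h : i < k), L[i]'(by omega) = b ⟨i, h⟩ := by
    intro i h
    show (List.ofFn b ++ List.ofFn c)[i]'_ = _
    rw [List.getElem_append_left (by simpa using h), List.getElem_ofFn]
  have hgetc : ∀ (j : ℕ) (h1 : k ≤ j) (h2 : j < k + l),
      L[j]'(by omega) = c ⟨j - k, by omega⟩ := by
    intro j h1 h2
    show (List.ofFn b ++ List.ofFn c)[j]'_ = _
    rw [List.getElem_append_right (by simpa using h1)]
    simp
  set f : ℕ → α := fun i => L[i % (k + l)]'(by rw [hlen]; exact Nat.mod_lt _ hn)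
    with hf
  have hfb : ∀ (i : ℕ) (hik : i % (k + l) < k), f i = b ⟨i % (k + l), hik⟩ :=
    fun i hik => hgetb _ hik
  have hfc : ∀ (i : ℕ) (hik : k ≤ i % (k + l)),
      f i = c ⟨i % (k + l) - k, by have := Nat.mod_lt i hn; omega⟩ :=
    fun i hik => hgetc _ hik (Nat.mod_lt i hn)
  have hstep : ∀ i : ℕ, L.formPerm (f i) = f (i + 1) := by
    intro i
    have h1 : i % (k + l) < L.length := by rw [hlen]; exact Nat.mod_lt _ hn
    rw [hf]
    simp only
    rw [List.formPerm_apply_getElem L hnodup _ h1]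
    congr 1
    rw [hlen, Nat.mod_add_mod]
  set σ := Equiv.swap (b (I r)) (c (J r)) * L.formPerm with hσ
  have hswapstep : ∀ i : ℕ, f (i + 1) ≠ b (I r) → f (i + 1) ≠ c (J r) →
      σ (f i) = f (i + 1) := by
    intro i h1 h2
    rw [hσ, Equiv.Perm.mul_apply, hstep, Equiv.swap_apply_of_ne_of_ne h1 h2]
  rcases hrs.lt_or_gt with h | h
  · -- r < s : path from b (I s) at position I s to c (J s) at position k + J s
    have hIsr : (I r : ℕ) < I s := hI h
    have hJsr : (J s : ℕ) < J r := hJ h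
    have key : ∀ i, (I s : ℕ) ≤ i → i < k + J s → σ (f i) = f (i + 1) := by
      intro i hi1 hi2
      have hm : (i + 1) % (k + l) = i + 1 := Nat.mod_eq_of_lt (by omega)
      refine hswapstep i ?_ ?_ <;>
        rcases Nat.lt_or_ge ((i + 1) % (k + l)) k with hc1 | hc1
      · rw [hfb _ hc1]
        intro hcon
        have hv := congrArg Fin.val (hb.injective hcon)
        simp only at hv; omega
      · rw [hfc _ hc1]
        exact (hbc (I r) _).ne'
      · rw [hfb _ hc1]
        exact (hbc _ (J r)).ne
      · rw [hfc _ hc1]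
        intro hcon
        have hv := congrArg Fin.val (hc.injective hcon)
        simp only at hv; omega
    have hac : σ.SameCycle (f (I s)) (f (k + J s)) :=
      chainSC σ f _ _ (by omega) key
    have hm1 : ((I s : ℕ)) % (k + l) = I s := Nat.mod_eq_of_lt (by omega)
    have hm2 : (k + (J s : ℕ)) % (k + l) = k + J s := Nat.mod_eq_of_lt (by omega)
    have e1 : f (I s : ℕ) = b (I s) := by
      rw [hfb _ (by omega)]; exact congrArg b (Fin.ext hm1)
    have e2 : f (k + (J s : ℕ)) = c (J s) := by
      rw [hfc _ (by omega)]
      refine congrArg c (Fin.ext ?_)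
      show (k + (J s : ℕ)) % (k + l) - k = (J s : ℕ)
      omega
    rwa [e1, e2] at hac
  · -- s < r : path from c (J s) at position k + J s to b (I s) at position (k+l)+I s
    have hIsr : (I s : ℕ) < I r := hI h
    have hJsr : (J r : ℕ) < J s := hJ h
    have key : ∀ i, k + (J s : ℕ) ≤ i → i < (k + l) + I s →
        σ (f i) = f (i + 1) := by
      intro i hi1 hi2
      have hm' : (i + 1) % (k + l) = i + 1 ∨ (i + 1) % (k + l) = i + 1 - (k + l) := by
        rcases Nat.lt_or_ge (i + 1) (k + l) with h' | h'
        · exact Or.inl (Nat.mod_eq_of_lt h')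
        · right
          rw [Nat.mod_eq_sub_mod h']
          exact Nat.mod_eq_of_lt (by omega)
      refine hswapstep i ?_ ?_ <;>
        rcases Nat.lt_or_ge ((i + 1) % (k + l)) k with hc1 | hc1
      · rw [hfb _ hc1]
        intro hcon
        have hv := congrArg Fin.val (hb.injective hcon)
        simp only at hv
        rcases hm' with hm | hm <;> omega
      · rw [hfc _ hc1]
        exact (hbc (I r) _).ne'
      · rw [hfb _ hc1]
        exact (hbc _ (J r)).ne
      · rw [hfc _ hc1]
        intro hcon
        have hv := congrArg Fin.val (hc.injective hcon)
        simp only at hv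
        rcases hm' with hm | hm <;> omega
    have hac : σ.SameCycle (f (k + J s)) (f ((k + l) + I s)) :=
      chainSC σ f _ _ (by omega) key
    have hm2 : (k + (J s : ℕ)) % (k + l) = k + J s := Nat.mod_eq_of_lt (by omega)
    have hm1 : ((k + l) + (I s : ℕ)) % (k + l) = I s := by
      rw [Nat.add_mod_left]
      exact Nat.mod_eq_of_lt (by omega)
    have e1 : f (k + (J s : ℕ)) = c (J s) := by
      rw [hfc _ (by omega)]
      refine congrArg c (Fin.ext ?_)
      show (k + (J s : ℕ)) % (k + l) - k = (J s : ℕ)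
      omega
    have e2 : f ((k + l) + (I s : ℕ)) = b (I s) := by
      rw [hfb _ (by omega)]; exact congrArg b (Fin.ext hm1)
    rw [e1, e2] at hac
    exact hac.symm
end
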